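/- arXiv:2503.06570 — 9 statements merged into one kernel-verified Lean document; each statement's English description precedes it below -/
import Mathlib

section
/- Let f : [0, ∞) → ℂ be continuous and let α, β ∈ ℂ with Re α > 0 and Re β > 0. Then for every t ≥ 0, the iterated Riemann–Liouville integral satisfies I_α⟨I_β⟨f⟩⟩(t) = I_{α+β}⟨f⟩(t). -/
/-- Complex power of a real number via the real logarithm:
`s ^ w := exp (w * log s)`. -/
noncomputable def cpowR (s : ℝ) (w : ℂ) : ℂ := Complex.exp (w * Real.log s)

/-- The Riemann–Liouville integral `I_α⟨f⟩(t) = ∫_0^t f x * (t-x)^(α-1)/Γ(α) dx`. -/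
noncomputable def RL (α : ℂ) (f : ℝ → ℂ) (t : ℝ) : ℂ :=
  ∫ x in (0:ℝ)..t, f x * cpowR (t - x) (α - 1) / Complex.Gamma α

open MeasureTheory Set Complex

lemma cpowR_eq {s : ℝ} (hs : 0 < s) (w : ℂ) : cpowR s w = (s : ℂ) ^ w := by
  rw [cpowR, Complex.cpow_def_of_ne_zero (by exact_mod_cast hs.ne'),
    ← Complex.ofReal_log hs.le, mul_comm]

lemma measurable_ofReal_cpow (w : ℂ) : Measurable fun s : ℝ => (s : ℂ) ^ w := by
  have h : (fun s : ℝ => (s : ℂ) ^ w) = fun s : ℝ =>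
      if s = 0 then (if w = 0 then 1 else 0) else Complex.exp (Complex.log s * w) := by
    funext s; rw [Complex.cpow_def]; simp [Complex.ofReal_eq_zero]
  rw [h]
  refine Measurable.ite ?_ measurable_const ((Complex.measurable_ofReal.clog.mul_const w).cexp)
  simpa [Set.setOf_eq_eq_singleton] using measurableSet_singleton (0:ℝ)

lemma ae_ne_vol (t : ℝ) : ∀ᵐ x : ℝ, x ≠ t := by
  rw [MeasureTheory.ae_iff]
  simpa [Set.setOf_eq_eq_singleton] using Real.volume_singleton (a := t)

lemma RL_eq (α : ℂ) (F : ℝ → ℂ) {t : ℝ} (ht : 0 ≤ t) :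
    RL α F t = (∫ x in (0:ℝ)..t, F x * ((t - x : ℝ) : ℂ) ^ (α - 1)) / Complex.Gamma α := by
  rw [RL, ← intervalIntegral.integral_div]
  refine intervalIntegral.integral_congr_ae ?_
  filter_upwards [ae_ne_vol t] with x hx hmem
  rw [Set.uIoc_of_le ht] at hmem
  rw [cpowR_eq (sub_pos.mpr (lt_of_le_of_ne hmem.2 hx))]

set_option maxHeartbeats 1000000 in
theorem stmt0 (f : ℝ → ℂ) (hf : ContinuousOn f (Set.Ici 0))
    (α β : ℂ) (hα : 0 < α.re) (hβ : 0 < β.re) :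
    ∀ t : ℝ, 0 ≤ t → RL α (RL β f) t = RL (α + β) f t := by
  intro t ht
  have hβ1 : (-1:ℝ) < (β-1).re := by simp [Complex.sub_re]; linarith
  have hα1 : (-1:ℝ) < (α-1).re := by simp [Complex.sub_re]; linarith
  set μ : Measure ℝ := volume.restrict (Set.Ioc 0 t) with hμdef
  -- bound on f
  obtain ⟨M, hM⟩ := isCompact_Icc.exists_bound_of_continuousOn
    (hf.mono (Set.Icc_subset_Ici_self (a := t) (b := (0:ℝ))))
  have hM0 : 0 ≤ M := le_trans (norm_nonneg _) (hM 0 ⟨le_refl 0, ht⟩)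
  -- the two-variable kernel
  set g : ℝ × ℝ → ℂ := fun p =>
    f p.2 * ((p.1 - p.2 : ℝ) : ℂ) ^ (β - 1) * ((t - p.1 : ℝ) : ℂ) ^ (α - 1) with hgdef
  set T : Set (ℝ × ℝ) := {p | p.2 ≤ p.1} with hTdef
  have hT : MeasurableSet T := measurableSet_le measurable_snd measurable_fst
  set F : ℝ × ℝ → ℂ := T.indicator g with hFdef
  -- sections of F
  have hFsec : ∀ x : ℝ, (fun y => F (x, y)) = (Set.Iic x).indicator fun y => g (x, y) := by
    intro x; funext y
    by_cases h : y ≤ x <;> simp [hFdef, hTdef, Set.indicator_apply, h]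
  -- complex kernel integrability
  have hker : ∀ {c : ℝ}, 0 ≤ c →
      IntervalIntegrable (fun y : ℝ => ((c - y : ℝ) : ℂ) ^ (β - 1)) volume 0 c := by
    intro c hc
    have h1 : IntervalIntegrable (fun u : ℝ => (u:ℂ) ^ (β-1)) volume 0 c :=
      intervalIntegral.intervalIntegrable_cpow' hβ1
    simpa using (h1.comp_sub_left c).symm
  -- integrability of sections
  have hsec : ∀ x ∈ Set.Ioc (0:ℝ) t,
      IntegrableOn (fun y => f y * ((x - y : ℝ):ℂ) ^ (β-1)) (Set.Ioc 0 x) volume := by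
    intro x hx
    have h2 := (hker hx.1.le).continuousOn_mul
      (hf.mono (by rw [Set.uIcc_of_le hx.1.le]; exact Set.Icc_subset_Ici_self))
    rwa [intervalIntegrable_iff, Set.uIoc_of_le hx.1.le] at h2
  -- real kernels
  have hkerR : IntegrableOn (fun x : ℝ => (t - x) ^ (α.re - 1)) (Set.Ioc 0 t) volume := by
    have h1 : IntervalIntegrable (fun u : ℝ => u ^ (α.re - 1)) volume 0 t :=
      intervalIntegral.intervalIntegrable_rpow' (by linarith)
    have h2 := (h1.comp_sub_left t).symm
    rwa [sub_zero, sub_self, intervalIntegrable_iff, Set.uIoc_of_le ht] at h2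
  have hkerRb : ∀ {c : ℝ}, 0 ≤ c →
      IntegrableOn (fun y : ℝ => (c - y) ^ (β.re - 1)) (Set.Ioc 0 c) volume := by
    intro c hc
    have h1 : IntervalIntegrable (fun u : ℝ => u ^ (β.re - 1)) volume 0 c :=
      intervalIntegral.intervalIntegrable_rpow' (by linarith)
    have h2 := (h1.comp_sub_left c).symm
    rwa [sub_zero, sub_self, intervalIntegrable_iff, Set.uIoc_of_le hc] at h2
  have hIb : ∀ {c : ℝ}, 0 ≤ c →
      (∫ y in Set.Ioc 0 c, (c - y) ^ (β.re - 1)) = c ^ β.re / β.re := by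
    intro c hc
    rw [← intervalIntegral.integral_of_le hc,
      intervalIntegral.integral_comp_sub_left (fun u : ℝ => u ^ (β.re - 1)) c,
      sub_self, sub_zero, integral_rpow (Or.inl (by linarith)),
      sub_add_cancel, Real.zero_rpow hβ.ne', sub_zero]
  -- measurability
  have hfm : AEStronglyMeasurable f μ :=
    (hf.mono (Set.Ioc_subset_Icc_self.trans Set.Icc_subset_Ici_self)).aestronglyMeasurable measurableSet_Ioc
  have hgm : AEStronglyMeasurable g (μ.prod μ) := by
    refine (hfm.comp_snd.mul ?_).mul ?_
    · exact ((measurable_ofReal_cpow (β-1)).comp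
        (measurable_fst.sub measurable_snd)).aestronglyMeasurable
    · exact ((measurable_ofReal_cpow (α-1)).comp
        (measurable_const.sub measurable_fst)).aestronglyMeasurable
  have hFm : AEStronglyMeasurable F (μ.prod μ) := hgm.indicator hT
  have hinter : ∀ x ∈ Set.Ioc (0:ℝ) t, Set.Iic x ∩ Set.Ioc 0 t = Set.Ioc 0 x := by
    intro x hx
    ext y
    simp only [Set.mem_inter_iff, Set.mem_Iic, Set.mem_Ioc]
    constructor
    · rintro ⟨h1, h2, _⟩; exact ⟨h2, h1⟩
    · rintro ⟨h1, h2⟩; exact ⟨h2, h1, le_trans h2 hx.2⟩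
  -- integrability of F on the product
  have key_int : Integrable F (μ.prod μ) := by
    rw [MeasureTheory.integrable_prod_iff hFm]
    constructor
    · filter_upwards [MeasureTheory.ae_restrict_mem measurableSet_Ioc] with x hx
      rw [hFsec x, MeasureTheory.integrable_indicator_iff measurableSet_Iic]
      have hrr : μ.restrict (Set.Iic x) = volume.restrict (Set.Ioc 0 x) := by
        rw [hμdef, Measure.restrict_restrict measurableSet_Iic, hinter x hx]
      show Integrable _ (μ.restrict (Set.Iic x))
      rw [hrr]
      simp only [hgdef]
      exact (hsec x hx).mul_const _
    · have haesm : AEStronglyMeasurable (fun x => ∫ y, ‖F (x, y)‖ ∂μ) μ :=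
        hFm.norm.integral_prod_right'
      refine Integrable.mono' (g := fun x => (t - x) ^ (α.re - 1) * (M * (t ^ β.re / β.re)))
        (hkerR.mul_const _) haesm ?_
      filter_upwards [MeasureTheory.ae_restrict_mem measurableSet_Ioc,
        ae_restrict_of_ae (ae_ne_vol t)] with x hx hxt
      have hxt' : x < t := lt_of_le_of_ne hx.2 hxt
      rw [Real.norm_of_nonneg (integral_nonneg fun y => norm_nonneg _)]
      have e1 : (∫ y, ‖F (x, y)‖ ∂μ) = ∫ y in Set.Ioc 0 x, ‖g (x, y)‖ := by
        have : (fun y => ‖F (x, y)‖) = (Set.Iic x).indicator fun y => ‖g (x, y)‖ := by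
          funext y
          rw [congrFun (hFsec x) y, norm_indicator_eq_indicator_norm]
        rw [this, hμdef, MeasureTheory.setIntegral_indicator measurableSet_Iic,
          Set.inter_comm, hinter x hx]
      rw [e1]
      have hbnd : (∫ y in Set.Ioc 0 x, ‖g (x, y)‖)
          ≤ ∫ y in Set.Ioc 0 x, M * (x - y) ^ (β.re - 1) * (t - x) ^ (α.re - 1) := by
        simp only [hgdef]
        rw [← MeasureTheory.setIntegral_congr_set Ioo_ae_eq_Ioc,
          ← MeasureTheory.setIntegral_congr_set
            (Ioo_ae_eq_Ioc (a := (0:ℝ)) (b := x))]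
        refine MeasureTheory.setIntegral_mono_on
          (MeasureTheory.IntegrableOn.mono_set (((hsec x hx).mul_const _).norm)
            Set.Ioo_subset_Ioc_self)
          (MeasureTheory.IntegrableOn.mono_set (((hkerRb hx.1.le).const_mul M).mul_const _)
            Set.Ioo_subset_Ioc_self)
          measurableSet_Ioo fun y hy => ?_
        have h1 : (0:ℝ) < x - y := by linarith [hy.2]
        have h2 : (0:ℝ) < t - x := by linarith
        have e5 : ‖f y * ((x - y : ℝ):ℂ) ^ (β-1) * ((t - x : ℝ):ℂ) ^ (α-1)‖
            = ‖f y‖ * (x - y) ^ (β.re - 1) * (t - x) ^ (α.re - 1) := by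
          simp only [norm_mul]
          rw [Complex.norm_cpow_eq_rpow_re_of_pos h1, Complex.norm_cpow_eq_rpow_re_of_pos h2]
          simp [Complex.sub_re]
        rw [e5]
        have h3 : ‖f y‖ ≤ M := hM y ⟨hy.1.le, by linarith [hy.2]⟩
        exact mul_le_mul_of_nonneg_right (mul_le_mul_of_nonneg_right h3
          (Real.rpow_nonneg h1.le _)) (Real.rpow_nonneg h2.le _)
      refine le_trans hbnd ?_
      rw [MeasureTheory.integral_mul_const, MeasureTheory.integral_const_mul, hIb hx.1.le]
      have hxt2 : x ^ β.re ≤ t ^ β.re := Real.rpow_le_rpow hx.1.le hx.2 hβ.le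
      have hxb : M * (x ^ β.re / β.re) ≤ M * (t ^ β.re / β.re) :=
        mul_le_mul_of_nonneg_left (by
          rw [div_eq_mul_inv, div_eq_mul_inv]
          exact mul_le_mul_of_nonneg_right hxt2 (inv_nonneg.mpr hβ.le)) hM0
      rw [mul_comm]
      exact mul_le_mul_of_nonneg_left hxb (Real.rpow_nonneg (by linarith [hx.2]) _)
  -- Fubini swap
  have swap := MeasureTheory.integral_integral_swap (f := Function.curry F)
    (μ := μ) (ν := μ) (by rwa [Function.uncurry_curry])
  -- identify the left side
  have hLHS : (∫ x in Set.Ioc 0 t,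
        (∫ y in Set.Ioc 0 x, f y * ((x - y : ℝ):ℂ) ^ (β-1)) * ((t - x : ℝ):ℂ) ^ (α-1))
      = ∫ x, ∫ y, Function.curry F x y ∂μ ∂μ := by
    rw [hμdef]
    refine setIntegral_congr_fun measurableSet_Ioc fun x hx => ?_
    have : (∫ y, Function.curry F x y ∂μ) = ∫ y, F (x, y) ∂μ := rfl
    rw [this, hFsec x, hμdef, MeasureTheory.setIntegral_indicator measurableSet_Iic,
      Set.inter_comm, hinter x hx, ← MeasureTheory.integral_mul_const]
  -- identify the right side
  have hRHS : (∫ y, ∫ x, Function.curry F x y ∂μ ∂μ)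
      = Complex.betaIntegral β α
        * ∫ y in Set.Ioc 0 t, f y * ((t - y : ℝ):ℂ) ^ (α+β-1) := by
    rw [← MeasureTheory.integral_const_mul]
    refine MeasureTheory.integral_congr_ae ?_
    filter_upwards [MeasureTheory.ae_restrict_mem measurableSet_Ioc,
      ae_restrict_of_ae (ae_ne_vol t)] with y hy hyt
    have hyt' : y < t := lt_of_le_of_ne hy.2 hyt
    have hFsec2 : (fun x => Function.curry F x y) = (Set.Ici y).indicator fun x => g (x, y) := by
      funext x
      by_cases h : y ≤ x <;> simp [Function.curry, hFdef, hTdef, Set.indicator_apply, h]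
    rw [hFsec2, hμdef, MeasureTheory.setIntegral_indicator measurableSet_Ici]
    have hIcc : Set.Ioc 0 t ∩ Set.Ici y = Set.Icc y t := by
      ext x
      simp only [Set.mem_inter_iff, Set.mem_Ioc, Set.mem_Ici, Set.mem_Icc]
      constructor
      · rintro ⟨⟨_, h2⟩, h3⟩; exact ⟨h3, h2⟩
      · rintro ⟨h1, h2⟩; exact ⟨⟨lt_of_lt_of_le hy.1 h1, h2⟩, h1⟩
    rw [hIcc, MeasureTheory.integral_Icc_eq_integral_Ioc,
      ← intervalIntegral.integral_of_le hy.2]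
    have hg' : ∀ x : ℝ, g (x, y) = f y * (((x - y : ℝ):ℂ) ^ (β-1) * ((t - x : ℝ):ℂ) ^ (α-1)) := by
      intro x; rw [hgdef]; ring
    simp_rw [hg']
    rw [intervalIntegral.integral_const_mul]
    have hshift : (∫ x in y..t, ((x - y : ℝ):ℂ) ^ (β-1) * ((t - x : ℝ):ℂ) ^ (α-1))
        = ((t - y : ℝ):ℂ) ^ (β+α-1) * Complex.betaIntegral β α := by
      have h0 := intervalIntegral.integral_comp_add_right (a := (0:ℝ)) (b := t - y)
        (fun x => ((x - y : ℝ):ℂ) ^ (β-1) * ((t - x : ℝ):ℂ) ^ (α-1)) y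
      rw [zero_add, sub_add_cancel] at h0
      rw [← h0]
      have hcong : ∀ u : ℝ, ((u + y - y : ℝ):ℂ) ^ (β-1) * ((t - (u + y) : ℝ):ℂ) ^ (α-1)
          = (u:ℂ) ^ (β-1) * ((((t - y : ℝ)):ℂ) - (u:ℝ)) ^ (α-1) := by
        intro u
        congr 2
        · norm_num
        · push_cast; ring
      simp_rw [hcong]
      exact Complex.betaIntegral_scaled β α (by linarith : (0:ℝ) < t - y)
    rw [hshift]
    rw [show β + α - 1 = α + β - 1 by ring]
    ring
  -- main double-integral identity
  have hMain : (∫ x in Set.Ioc 0 t,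
        (∫ y in Set.Ioc 0 x, f y * ((x - y : ℝ):ℂ) ^ (β-1)) * ((t - x : ℝ):ℂ) ^ (α-1))
      = Complex.betaIntegral β α
        * ∫ y in Set.Ioc 0 t, f y * ((t - y : ℝ):ℂ) ^ (α+β-1) := by
    rw [hLHS, swap, hRHS]
  -- assemble
  rw [RL_eq α _ ht, RL_eq (α+β) f ht]
  have e2 : (∫ x in (0:ℝ)..t, RL β f x * ((t - x : ℝ):ℂ) ^ (α-1))
      = (∫ x in (0:ℝ)..t,
          (∫ y in (0:ℝ)..x, f y * ((x - y : ℝ):ℂ) ^ (β-1)) * ((t - x : ℝ):ℂ) ^ (α-1))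
        / Complex.Gamma β := by
    rw [← intervalIntegral.integral_div]
    refine intervalIntegral.integral_congr_ae (MeasureTheory.ae_of_all _ fun x hmem => ?_)
    rw [Set.uIoc_of_le ht] at hmem
    rw [RL_eq β f hmem.1.le, div_mul_eq_mul_div]
  rw [e2]
  have e3 : (∫ x in (0:ℝ)..t,
        (∫ y in (0:ℝ)..x, f y * ((x - y : ℝ):ℂ) ^ (β-1)) * ((t - x : ℝ):ℂ) ^ (α-1))
      = ∫ x in Set.Ioc 0 t,
        (∫ y in Set.Ioc 0 x, f y * ((x - y : ℝ):ℂ) ^ (β-1)) * ((t - x : ℝ):ℂ) ^ (α-1) := by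
    rw [intervalIntegral.integral_of_le ht]
    refine setIntegral_congr_fun measurableSet_Ioc fun x hx => ?_
    rw [intervalIntegral.integral_of_le hx.1.le]
  rw [e3, hMain, intervalIntegral.integral_of_le ht]
  have hΓ : Complex.Gamma β * Complex.Gamma α
      = Complex.Gamma (α+β) * Complex.betaIntegral β α := by
    rw [add_comm]
    exact Complex.Gamma_mul_Gamma_eq_betaIntegral hβ hα
  have hγα : Complex.Gamma α ≠ 0 := Complex.Gamma_ne_zero_of_re_pos hα
  have hγβ : Complex.Gamma β ≠ 0 := Complex.Gamma_ne_zero_of_re_pos hβ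
  have hγαβ : Complex.Gamma (α+β) ≠ 0 :=
    Complex.Gamma_ne_zero_of_re_pos (by rw [Complex.add_re]; linarith)
  rw [div_div, div_eq_div_iff (mul_ne_zero hγβ hγα) hγαβ, hΓ]
  ring
end

section
/- Let α, λ ∈ ℂ with Re α > 0 and Re λ > 0. Then lim_{t→+∞} e^(−λt)·I_α⟨x ↦ e^(λx)⟩(t) = λ^(−α), where λ^(−α) := exp(−α·Log λ) with the principal branch of the complex logarithm (so arg λ ∈ (−π/2, π/2)). -/
open MeasureTheory Set Filter Complex


-- integrability of real bound
lemma bound_int {c r : ℝ} (hc : -1 < c) (hr : 0 < r) :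
    IntegrableOn (fun u : ℝ => u ^ c * Real.exp (-(r * u))) (Ioi 0) := by
  have h := integrableOn_rpow_mul_exp_neg_mul_rpow hc one_pos hr
  refine h.congr_fun (fun x hx => ?_) measurableSet_Ioi
  simp only [Real.rpow_one]; ring_nf

lemma meas_aux (b z : ℂ) :
    AEStronglyMeasurable (fun u : ℝ => (u : ℂ) ^ b * Complex.exp (-(z * u)))
      (volume.restrict (Ioi 0)) := by
  apply ContinuousOn.aestronglyMeasurable ?_ measurableSet_Ioi
  intro u hu
  have h1 : ContinuousWithinAt (fun u : ℝ => (u : ℂ) ^ b) (Ioi 0) u := by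
    exact ((continuousAt_cpow_const (Or.inl (by exact_mod_cast hu))).comp
      Complex.continuous_ofReal.continuousAt).continuousWithinAt
  exact h1.mul ((Complex.continuous_exp.comp
    ((continuous_const.mul Complex.continuous_ofReal).neg)).continuousWithinAt)

lemma norm_term {b z : ℂ} {u : ℝ} (hu : 0 < u) :
    ‖(u : ℂ) ^ b * Complex.exp (-(z * u))‖ = u ^ b.re * Real.exp (-(z.re * u)) := by
  rw [norm_mul, Complex.norm_cpow_eq_rpow_re_of_pos hu,
    Complex.norm_exp]
  congr 2
  simp

lemma int_aux {b z : ℂ} (hb : -1 < b.re) (hz : 0 < z.re) :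
    IntegrableOn (fun u : ℝ => (u : ℂ) ^ b * Complex.exp (-(z * u))) (Ioi 0) := by
  refine (bound_int hb hz).mono' (meas_aux b z) ?_
  refine (ae_restrict_iff' measurableSet_Ioi).2 (Filter.Eventually.of_forall fun u hu => ?_)
  rw [norm_term hu]

-- G is differentiable on the half plane
lemma G_hasDerivAt {a : ℂ} (ha : 0 < a.re) {z₀ : ℂ} (hz₀ : 0 < z₀.re) :
    HasDerivAt (fun z : ℂ => ∫ u in Ioi (0:ℝ), (u : ℂ) ^ (a - 1) * Complex.exp (-(z * u)))
      (∫ u in Ioi (0:ℝ), (u : ℂ) ^ (a - 1) * (Complex.exp (-(z₀ * u)) * (-u))) z₀ := by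
  set ε := z₀.re / 2 with hε
  have hε0 : 0 < ε := by positivity
  have H := hasDerivAt_integral_of_dominated_loc_of_deriv_le (μ := volume.restrict (Ioi 0))
    (F := fun (z : ℂ) (u : ℝ) => (u : ℂ) ^ (a - 1) * Complex.exp (-(z * u)))
    (F' := fun (z : ℂ) (u : ℝ) => (u : ℂ) ^ (a - 1) * (Complex.exp (-(z * u)) * (-(u : ℂ))))
    (x₀ := z₀) (bound := fun u : ℝ => u ^ a.re * Real.exp (-(ε * u))) (Metric.ball_mem_nhds z₀ hε0)
    (Filter.Eventually.of_forall fun z => meas_aux (a - 1) z) (int_aux (by simp [ha.le]; linarith) hz₀)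
    ?_ ?_ ?_ ?_
  · exact H.2
  · -- measurability of F' z₀
    apply ContinuousOn.aestronglyMeasurable ?_ measurableSet_Ioi
    intro u hu
    have h1 : ContinuousWithinAt (fun u : ℝ => (u : ℂ) ^ (a - 1)) (Ioi 0) u :=
      ((continuousAt_cpow_const (Or.inl (by exact_mod_cast hu))).comp
        Complex.continuous_ofReal.continuousAt).continuousWithinAt
    exact h1.mul (((Complex.continuous_exp.comp
      ((continuous_const.mul Complex.continuous_ofReal).neg)).mul
      (Complex.continuous_ofReal.neg)).continuousWithinAt)
  · -- bound
    refine (ae_restrict_iff' measurableSet_Ioi).2 (Filter.Eventually.of_forall fun u hu z hz => ?_)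
    have hu' : (0:ℝ) < u := hu
    have hre : ε ≤ z.re := by
      have := abs_re_le_norm (z - z₀)
      have h2 : ‖z - z₀‖ < ε := by
        simpa [Complex.dist_eq] using mem_ball_iff_norm.mp hz
      have := abs_le.mp ((abs_re_le_norm (z - z₀)).trans h2.le)
      simp only [Complex.sub_re] at this
      linarith [this.1]
    rw [norm_mul, norm_mul,
      Complex.norm_cpow_eq_rpow_re_of_pos hu', Complex.norm_exp, norm_neg,
      Complex.norm_real, Real.norm_eq_abs, abs_of_pos hu']
    have hexp : (-(z * (u:ℂ))).re = -(z.re * u) := by simp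
    rw [hexp]
    have h1 : u ^ (a.re - 1) * (Real.exp (-(z.re * u)) * u)
        = u ^ a.re * Real.exp (-(z.re * u)) := by
      rw [Real.rpow_sub hu', Real.rpow_one]; field_simp
    simp only [Complex.sub_re, Complex.one_re]
    rw [h1]
    have h2 : Real.exp (-(z.re * u)) ≤ Real.exp (-(ε * u)) :=
      Real.exp_le_exp.2 (by nlinarith)
    exact mul_le_mul_of_nonneg_left h2 (Real.rpow_nonneg hu'.le _)
  · exact (bound_int (by linarith) hε0)
  · -- differentiability
    refine (ae_restrict_iff' measurableSet_Ioi).2 (Filter.Eventually.of_forall fun u hu z hz => ?_)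
    have h : HasDerivAt (fun z : ℂ => Complex.exp (-(z * u))) (Complex.exp (-(z * u)) * (-u)) z := by
      have h0 : HasDerivAt (fun z : ℂ => -(z * (u:ℂ))) (-(u:ℂ)) z := by
        simpa using ((hasDerivAt_id z).mul_const (u:ℂ)).fun_neg
      exact h0.cexp
    exact h.const_mul _

lemma key {a : ℂ} (ha : 0 < a.re) {z : ℂ} (hz : 0 < z.re) :
    ∫ u in Ioi (0:ℝ), (u : ℂ) ^ (a - 1) * Complex.exp (-(z * u))
      = Complex.Gamma a * z ^ (-a) := by
  set U : Set ℂ := {w : ℂ | 0 < w.re} with hU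
  have hUopen : IsOpen U := isOpen_lt continuous_const Complex.continuous_re
  have hG : AnalyticOnNhd ℂ
      (fun z : ℂ => ∫ u in Ioi (0:ℝ), (u : ℂ) ^ (a - 1) * Complex.exp (-(z * u))) U := by
    refine DifferentiableOn.analyticOnNhd (fun w hw => ?_) hUopen
    exact (G_hasDerivAt ha hw).differentiableAt.differentiableWithinAt
  have hH : AnalyticOnNhd ℂ (fun z : ℂ => Complex.Gamma a * z ^ (-a)) U := by
    refine DifferentiableOn.analyticOnNhd (fun w hw => ?_) hUopen
    exact (((differentiableAt_id).cpow (differentiableAt_const _)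
      (Or.inl hw)).const_mul _).differentiableWithinAt
  have hre : ∀ r : ℝ, 0 < r →
      (∫ u in Ioi (0:ℝ), (u : ℂ) ^ (a - 1) * Complex.exp (-((r : ℂ) * u)))
        = Complex.Gamma a * (r : ℂ) ^ (-a) := by
    intro r hr
    have h := Complex.integral_cpow_mul_exp_neg_mul_Ioi ha hr
    have h2 : ∀ u : ℝ, -((r:ℂ) * u) = ((-(r * u) : ℝ) : ℂ) := by intro u; push_cast; ring
    rw [show (∫ u in Ioi (0:ℝ), (u : ℂ) ^ (a - 1) * Complex.exp (-((r : ℂ) * u)))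
        = ∫ u in Ioi (0:ℝ), (u : ℂ) ^ (a - 1) * Complex.exp (-(r * u)) from rfl, h]
    rw [one_div, inv_cpow _ _ (by rw [Complex.arg_ofReal_of_nonneg hr.le]; exact Real.pi_ne_zero.symm),
      ← Complex.cpow_neg, mul_comm]
  -- identity theorem
  have hconn : IsPreconnected U := (convex_halfSpace_re_gt 0).isPreconnected
  have h1 : (1 : ℂ) ∈ U := by simp [hU]
  have hfreq : ∃ᶠ w in nhdsWithin 1 {(1:ℂ)}ᶜ,
      (∫ u in Ioi (0:ℝ), (u : ℂ) ^ (a - 1) * Complex.exp (-(w * u)))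
        = Complex.Gamma a * w ^ (-a) := by
    have htend : Filter.Tendsto (fun n : ℕ => ((1 + 1 / (n + 1) : ℝ) : ℂ)) Filter.atTop
        (nhdsWithin 1 {(1:ℂ)}ᶜ) := by
      rw [tendsto_nhdsWithin_iff]
      constructor
      · have : Filter.Tendsto (fun n : ℕ => (1 + 1 / (n + 1) : ℝ)) Filter.atTop (nhds 1) := by
          simpa using tendsto_const_nhds.add (tendsto_one_div_add_atTop_nhds_zero_nat (𝕜 := ℝ))
        have h3 := (Complex.continuous_ofReal.tendsto 1).comp this
        simpa [Function.comp_def] using h3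
      · refine Filter.Eventually.of_forall fun n => ?_
        simp only [mem_compl_iff, mem_singleton_iff]
        intro hcon
        have : (1 + 1 / (n + 1) : ℝ) = 1 := by exact_mod_cast hcon
        have hn : (0:ℝ) < 1 / (n + 1) := by positivity
        linarith
    exact htend.frequently (Filter.Frequently.of_forall fun n =>
      hre _ (by positivity))
  exact hG.eqOn_of_preconnected_of_frequently_eq hH hconn h1 hfreq hz

theorem stmt2 (α lam : ℂ) (hα : 0 < α.re) (hlam : 0 < lam.re) :
    Filter.Tendsto
      (fun t : ℝ => Complex.exp (-(lam * t)) * RL α (fun x : ℝ => Complex.exp (lam * x)) t)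
      Filter.atTop (nhds (Complex.exp (-α * Complex.log lam))) := by
  have hlam0 : lam ≠ 0 := fun h => by simp [h] at hlam
  set g : ℝ → ℂ := fun u => Complex.exp (-(lam * u)) * cpowR u (α - 1) / Complex.Gamma α with hg
  have step1 : ∀ t : ℝ,
      Complex.exp (-(lam * t)) * RL α (fun x : ℝ => Complex.exp (lam * x)) t
        = ∫ u in (0:ℝ)..t, g u := by
    intro t
    rw [RL, ← intervalIntegral.integral_const_mul]
    rw [show (∫ x in (0:ℝ)..t, Complex.exp (-(lam * t)) *
        (Complex.exp (lam * x) * cpowR (t - x) (α - 1) / Complex.Gamma α))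
        = ∫ x in (0:ℝ)..t, g (t - x) from by
      refine intervalIntegral.integral_congr fun x _ => ?_
      simp only [hg]
      have he : Complex.exp (-(lam * ((t - x : ℝ) : ℂ)))
          = Complex.exp (-(lam * t)) * Complex.exp (lam * x) := by
        rw [← Complex.exp_add]; push_cast; ring_nf
      rw [he]; ring]
    rw [intervalIntegral.integral_comp_sub_left g t]
    simp
  have hgh : ∀ u ∈ Ioi (0:ℝ),
      g u = (u : ℂ) ^ (α - 1) * Complex.exp (-(lam * u)) / Complex.Gamma α := by
    intro u hu
    have hu' : (0:ℝ) < u := hu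
    rw [hg]
    simp only
    rw [Complex.cpow_def_of_ne_zero (by exact_mod_cast hu'.ne' : (u:ℂ) ≠ 0), cpowR,
      ← Complex.ofReal_log hu'.le]
    ring_nf
  have hint : IntegrableOn g (Ioi 0) := by
    have h0 : IntegrableOn
        (fun u : ℝ => (u : ℂ) ^ (α - 1) * Complex.exp (-(lam * u)) / Complex.Gamma α)
        (Ioi 0) :=
      (int_aux (by simp only [Complex.sub_re, Complex.one_re]; linarith) hlam).div_const _
    exact h0.congr_fun (fun u hu => (hgh u hu).symm) measurableSet_Ioi
  have hval : (∫ u in Ioi (0:ℝ), g u) = Complex.exp (-α * Complex.log lam) := by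
    rw [setIntegral_congr_fun measurableSet_Ioi hgh]
    simp_rw [div_eq_mul_inv, integral_mul_const]
    rw [key hα hlam, mul_comm, ← mul_assoc, inv_mul_cancel₀ (Complex.Gamma_ne_zero_of_re_pos hα),
      one_mul, Complex.cpow_def_of_ne_zero hlam0]
    ring_nf
  have := MeasureTheory.intervalIntegral_tendsto_integral_Ioi 0 hint tendsto_id
  rw [hval] at this
  exact this.congr fun t => (step1 t).symm
end

section
/- Let α, λ ∈ ℂ with Re α > 0 and Re λ > 0, and let L ∈ ℕ with L > Re α − 1. Then, as t → +∞ (t real), I_α⟨x ↦ e^(λx)⟩(t) = λ^(−α)·e^(λt) − ∑_{ℓ=1}^{L} (1/Γ(α − ℓ + 1))·λ^(−ℓ)·t^(α−ℓ) + o(t^(Re α − L)), where λ^(−α) := exp(−α·Log λ) with the principal branch of the complex logarithm, t^(α−ℓ) := exp((α−ℓ)·log t), and 1/Γ(z) is interpreted as 0 at the poles of Γ. -/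
open MeasureTheory Filter Set Asymptotics

namespace Stmt3Aux

lemma cpowR_eq {s : ℝ} (hs : 0 < s) (w : ℂ) : cpowR s w = (s : ℂ) ^ w := by
  rw [cpowR, Complex.cpow_def_of_ne_zero (by exact_mod_cast hs.ne'),
    ← Complex.ofReal_log hs.le, mul_comm]

lemma norm_cpowR {s : ℝ} (hs : 0 < s) (w : ℂ) : ‖cpowR s w‖ = s ^ w.re := by
  rw [cpowR, Complex.norm_exp, Real.rpow_def_of_pos hs]
  congr 1
  simp [Complex.mul_re]
  ring

lemma norm_cexp (z : ℂ) : ‖Complex.exp z‖ = Real.exp z.re := by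
  rw [Complex.norm_exp]

lemma continuousAt_cpowR {u : ℝ} (hu : u ≠ 0) (w : ℂ) :
    ContinuousAt (fun s : ℝ => cpowR s w) u := by
  have h1 : ContinuousAt Real.log u := Real.continuousAt_log hu
  have h2 : ContinuousAt (fun s : ℝ => ((Real.log s : ℝ) : ℂ)) u :=
    Complex.continuous_ofReal.continuousAt.comp h1
  exact Complex.continuous_exp.continuousAt.comp (continuousAt_const.mul h2)

lemma continuousAt_integrand {β lam : ℂ} {u : ℝ} (hu : u ≠ 0) :
    ContinuousAt (fun s : ℝ => cpowR s β * Complex.exp (-(lam * s))) u := by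
  refine (continuousAt_cpowR hu β).mul ?_
  exact Complex.continuous_exp.continuousAt.comp
    ((continuous_const.mul Complex.continuous_ofReal).neg.continuousAt)

lemma norm_integrand {β lam : ℂ} {u : ℝ} (hu : 0 < u) :
    ‖cpowR u β * Complex.exp (-(lam * u))‖ = u ^ β.re * Real.exp (-(lam.re * u)) := by
  rw [norm_mul, norm_cpowR hu, norm_cexp]
  congr 2
  simp [Complex.mul_re]


lemma bigO_aux {c r : ℝ} (hr : 0 < r) :
    (fun u : ℝ => u ^ c * Real.exp (-(r * u))) =O[atTop] fun x => Real.exp (-(r / 2) * x) := by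
  have h : Tendsto (fun u : ℝ => u ^ c * Real.exp (-(r/2) * u)) atTop (nhds 0) :=
    tendsto_rpow_mul_exp_neg_mul_atTop_nhds_zero c (r/2) (half_pos hr)
  refine (Asymptotics.isLittleO_iff_tendsto' ?_).2 ?_ |>.isBigO
  · filter_upwards with x hx
    exact absurd hx (Real.exp_ne_zero _)
  · apply h.congr'
    filter_upwards with x
    rw [mul_div_assoc, ← Real.exp_sub]
    ring_nf

lemma realInt_Ioi {c r t : ℝ} (hr : 0 < r) (ht : 0 < t) :
    IntegrableOn (fun u : ℝ => u ^ c * Real.exp (-(r * u))) (Ioi t) := by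
  apply integrable_of_isBigO_exp_neg (half_pos hr) ?_ (bigO_aux hr)
  intro x hx
  have hx0 : x ≠ 0 := (lt_of_lt_of_le ht hx).ne'
  exact ((Real.continuousAt_rpow_const x c (Or.inl hx0)).mul
    (Real.continuous_exp.continuousAt.comp
      (continuousAt_const.mul continuousAt_id).neg)).continuousWithinAt

lemma realInt_Ioi0 {c r : ℝ} (hr : 0 < r) (hc : -1 < c) :
    IntegrableOn (fun u : ℝ => u ^ c * Real.exp (-(r * u))) (Ioi 0) := by
  rw [← Set.Ioc_union_Ioi_eq_Ioi (zero_le_one (α := ℝ))]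
  refine IntegrableOn.union ?_ (realInt_Ioi hr one_pos)
  have hbase : IntegrableOn (fun u : ℝ => u ^ c) (Ioc (0:ℝ) 1) := by
    have := (intervalIntegral.intervalIntegrable_rpow' (a := 0) (b := 1) hc)
    rwa [intervalIntegrable_iff_integrableOn_Ioc_of_le zero_le_one] at this
  refine hbase.mono' ?_ ?_
  · apply ContinuousOn.aestronglyMeasurable ?_ measurableSet_Ioc
    intro x hx
    exact ((Real.continuousAt_rpow_const x c (Or.inl hx.1.ne')).mul
      (Real.continuous_exp.continuousAt.comp
        (continuousAt_const.mul continuousAt_id).neg)).continuousWithinAt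
  · filter_upwards [ae_restrict_mem measurableSet_Ioc] with x hx
    rw [Real.norm_eq_abs, abs_mul, abs_of_nonneg (Real.rpow_nonneg hx.1.le c),
      abs_of_nonneg (Real.exp_pos _).le]
    nth_rewrite 2 [← mul_one (x ^ c)]
    have hx0 := hx.1
    gcongr
    exact Real.exp_le_one_iff.2 (neg_nonpos.2 (by positivity))

lemma cInt_Ioi (β : ℂ) {lam : ℂ} (hlam : 0 < lam.re) {t : ℝ} (ht : 0 < t) :
    IntegrableOn (fun u : ℝ => cpowR u β * Complex.exp (-(lam * u))) (Ioi t) := by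
  refine (realInt_Ioi (c := β.re) hlam ht).mono' ?_ ?_
  · apply ContinuousOn.aestronglyMeasurable ?_ measurableSet_Ioi
    intro x hx
    exact (continuousAt_integrand (lt_trans ht hx).ne').continuousWithinAt
  · filter_upwards [ae_restrict_mem measurableSet_Ioi] with x hx
    rw [norm_integrand (lt_trans ht hx)]

lemma cInt_Ioi0 {β : ℂ} (hβ : -1 < β.re) {lam : ℂ} (hlam : 0 < lam.re) :
    IntegrableOn (fun u : ℝ => cpowR u β * Complex.exp (-(lam * u))) (Ioi 0) := by
  refine (realInt_Ioi0 (c := β.re) hlam hβ).mono' ?_ ?_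
  · apply ContinuousOn.aestronglyMeasurable ?_ measurableSet_Ioi
    intro x hx
    exact (continuousAt_integrand hx.ne').continuousWithinAt
  · filter_upwards [ae_restrict_mem measurableSet_Ioi] with x hx
    rw [norm_integrand hx]

lemma hasDerivAt_cpowR {u : ℝ} (hu : 0 < u) (β : ℂ) :
    HasDerivAt (fun s : ℝ => cpowR s β) (β * cpowR u (β - 1)) u := by
  have hlog : HasDerivAt (fun s : ℝ => ((Real.log s : ℝ) : ℂ)) (↑(u⁻¹)) u :=
    (Real.hasDerivAt_log hu.ne').ofReal_comp
  have h2 := (hlog.const_mul β).cexp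
  have he : Complex.exp ↑(Real.log u) = ↑u := by
    rw [← Complex.ofReal_exp, Real.exp_log hu]
  refine h2.congr_deriv ?_
  simp only [cpowR, sub_mul, one_mul, Complex.exp_sub, he]
  have : (u:ℂ) ≠ 0 := by exact_mod_cast hu.ne'
  field_simp
  rw [one_div, Complex.ofReal_inv, mul_assoc, inv_mul_cancel₀ this, mul_one]

lemma hasDerivAt_expNeg (lam : ℂ) (u : ℝ) :
    HasDerivAt (fun s : ℝ => Complex.exp (-(lam * s))) (-lam * Complex.exp (-(lam * u))) u := by
  have h0 : HasDerivAt (fun s : ℝ => ((s : ℝ) : ℂ)) 1 u := by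
    simpa using (hasDerivAt_id u).ofReal_comp
  have h : HasDerivAt (fun s : ℝ => -(lam * (s:ℂ))) (-lam) u := by
    simpa using (h0.const_mul lam).fun_neg
  simpa [mul_comm] using h.cexp

lemma integral_exp_Ioi {r : ℝ} (hr : 0 < r) (t : ℝ) :
    ∫ u in Ioi t, Real.exp (-(r * u)) = Real.exp (-(r * t)) / r := by
  have hderiv : ∀ x ∈ Ici t, HasDerivAt (fun u : ℝ => -(Real.exp (-(r * u)) / r))
      (Real.exp (-(r * x))) x := by
    intro x _
    have h1 : HasDerivAt (fun u : ℝ => -(r * u)) (-r) x := by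
      simpa using ((hasDerivAt_id x).const_mul r).fun_neg
    have := (h1.exp.div_const r).fun_neg
    refine this.congr_deriv ?_
    rw [mul_neg, neg_div, neg_neg, mul_div_assoc, div_self hr.ne', mul_one]
  have hint : IntegrableOn (fun u : ℝ => Real.exp (-(r * u))) (Ioi t) := by
    have := exp_neg_integrableOn_Ioi t hr
    simpa [neg_mul] using this
  have htend : Tendsto (fun u : ℝ => -(Real.exp (-(r * u)) / r)) atTop (nhds 0) := by
    have h1 : Tendsto (fun u : ℝ => -(r * u)) atTop atBot := by
      simpa [neg_mul] using (tendsto_id (α := ℝ) (x := atTop)).const_mul_atTop_of_neg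
        (neg_neg_iff_pos.2 hr)
    have := (Real.tendsto_exp_atBot.comp h1).neg.div_const r
    simpa [neg_div] using this
  have := integral_Ioi_of_hasDerivAt_of_tendsto' hderiv hint htend
  rw [this]
  field_simp
  ring

lemma tendsto_integrand_zero (β : ℂ) {lam : ℂ} (hlam : 0 < lam.re) (c : ℂ) :
    Tendsto (fun u : ℝ => cpowR u β * (c * Complex.exp (-(lam * u)))) atTop (nhds 0) := by
  have hg : Tendsto (fun u : ℝ => u ^ β.re * Real.exp (-lam.re * u) * ‖c‖) atTop (nhds 0) := by
    simpa using
      (tendsto_rpow_mul_exp_neg_mul_atTop_nhds_zero β.re lam.re hlam).mul_const ‖c‖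
  refine squeeze_zero_norm' ?_ hg
  filter_upwards [eventually_gt_atTop (0:ℝ)] with u hu
  rw [norm_mul, norm_cpowR hu β, norm_mul, norm_cexp]
  have : (-(lam * u)).re = -lam.re * u := by simp [Complex.mul_re]
  rw [this]
  ring_nf
  exact le_refl _

lemma ibp {lam : ℂ} (hlam : 0 < lam.re) (β : ℂ) {t : ℝ} (ht : 0 < t) :
    ∫ u in Ioi t, cpowR u β * Complex.exp (-(lam * u)) =
      cpowR t β * Complex.exp (-(lam * t)) / lam +
        (β / lam) * ∫ u in Ioi t, cpowR u (β - 1) * Complex.exp (-(lam * u)) := by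
  have hlam0 : lam ≠ 0 := fun h => by simp [h] at hlam
  set E : ℝ → ℂ := fun u => Complex.exp (-(lam * u)) with hE
  have hderiv : ∀ x ∈ Ici t, HasDerivAt (fun u : ℝ => cpowR u β * (-(E u) / lam))
      ((-β/lam) * (cpowR x (β - 1) * E x) + cpowR x β * E x) x := by
    intro x hx
    have hx0 : 0 < x := lt_of_lt_of_le ht hx
    have hE' : HasDerivAt (fun u : ℝ => -(E u) / lam) (E x) x := by
      have := ((hasDerivAt_expNeg lam x).neg).div_const lam
      refine this.congr_deriv ?_
      simp only [hE]
      field_simp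
    have := (hasDerivAt_cpowR hx0 β).mul hE'
    refine this.congr_deriv ?_
    ring
  have hint1 : IntegrableOn (fun u : ℝ => cpowR u (β - 1) * Complex.exp (-(lam * u))) (Ioi t) :=
    cInt_Ioi (β - 1) hlam ht
  have hint2 : IntegrableOn (fun u : ℝ => cpowR u β * Complex.exp (-(lam * u))) (Ioi t) :=
    cInt_Ioi β hlam ht
  have hf'int : IntegrableOn
      (fun x : ℝ => (-β/lam) * (cpowR x (β - 1) * E x) + cpowR x β * E x) (Ioi t) :=
    (hint1.const_mul _).add hint2
  have htend : Tendsto (fun u : ℝ => cpowR u β * (-(E u) / lam)) atTop (nhds 0) := by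
    have := tendsto_integrand_zero β hlam (-(1:ℂ)/lam)
    apply this.congr
    intro u
    simp only [hE]
    ring
  have key := integral_Ioi_of_hasDerivAt_of_tendsto' hderiv hf'int htend
  rw [integral_add (hint1.const_mul _) hint2, integral_const_mul] at key
  simp only [hE] at key ⊢
  linear_combination key

noncomputable def cc (α : ℂ) (n : ℕ) : ℂ := ∏ j ∈ Finset.Ico 1 n, (α - j)

lemma cc_succ (α : ℂ) {n : ℕ} (hn : 1 ≤ n) : cc α (n + 1) = cc α n * (α - n) := by
  rw [cc, cc, Finset.prod_Ico_succ_top hn]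

lemma expansion (α : ℂ) {lam : ℂ} (hlam : 0 < lam.re) {t : ℝ} (ht : 0 < t) (n : ℕ) :
    ∫ u in Ioi t, cpowR u (α - 1) * Complex.exp (-(lam * u)) =
      Complex.exp (-(lam * t)) *
          ∑ l ∈ Finset.Icc 1 n, cc α l * (lam ^ l)⁻¹ * cpowR t (α - l) +
        cc α (n + 1) * (lam ^ n)⁻¹ *
          ∫ u in Ioi t, cpowR u (α - 1 - n) * Complex.exp (-(lam * u)) := by
  have hlam0 : lam ≠ 0 := fun h => by simp [h] at hlam
  induction n with
  | zero => simp [cc]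
  | succ n ih =>
    rw [ih, ibp hlam (α - 1 - n) ht]
    have e1 : α - 1 - (n:ℂ) - 1 = α - 1 - ((n:ℕ) + 1 : ℕ) := by push_cast; ring
    have e2 : α - 1 - (n:ℂ) = α - (((n:ℕ) + 1 : ℕ) : ℂ) := by push_cast; ring
    rw [Finset.sum_Icc_succ_top (Nat.le_add_left 1 n), cc_succ α (Nat.le_add_left 1 n), ← e1, ← e2]
    field_simp
    ring

lemma Gamma_inv_succ (z : ℂ) : (Complex.Gamma (z + 1))⁻¹ * z = (Complex.Gamma z)⁻¹ := by
  rcases eq_or_ne z 0 with rfl | hz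
  · simp [Complex.Gamma_zero]
  · rw [Complex.Gamma_add_one z hz, mul_inv]
    rcases eq_or_ne (Complex.Gamma z) 0 with h0 | h0
    · simp [h0]
    · field_simp

lemma coeff (α : ℂ) : ∀ l : ℕ, 1 ≤ l →
    (Complex.Gamma α)⁻¹ * cc α l = (Complex.Gamma (α - l + 1))⁻¹ := by
  intro l hl
  induction l with
  | zero => omega
  | succ n ih =>
    rcases Nat.lt_or_ge n 1 with hn | hn
    · interval_cases n
      simp [cc]
    · rw [cc_succ α hn, ← mul_assoc, ih hn]
      have e1 : α - (n:ℂ) + 1 = (α - n) + 1 := by ring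
      have e2 : α - (((n:ℕ)+1:ℕ):ℂ) + 1 = α - n := by push_cast; ring
      rw [e1, e2, Gamma_inv_succ]

lemma laplace_real (α : ℂ) (hα : 0 < α.re) {r : ℝ} (hr : 0 < r) :
    ∫ u in Ioi (0:ℝ), cpowR u (α-1) * Complex.exp (-((r:ℂ) * u)) =
      Complex.exp (-α * Complex.log r) * Complex.Gamma α := by
  have h := Complex.integral_cpow_mul_exp_neg_mul_Ioi hα hr
  have e1 : ∫ u in Ioi (0:ℝ), cpowR u (α-1) * Complex.exp (-((r:ℂ) * u)) =
      ∫ u in Ioi (0:ℝ), (u:ℂ) ^ (α-1) * Complex.exp (-((r:ℂ) * u)) := by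
    refine setIntegral_congr_fun measurableSet_Ioi fun x hx => ?_
    rw [cpowR_eq hx (α-1)]
  rw [e1, h]
  congr 1
  have hrne : (r:ℂ) ≠ 0 := by exact_mod_cast hr.ne'
  rw [Complex.cpow_def_of_ne_zero (one_div_ne_zero hrne)]
  have e2 : Complex.log (1/(r:ℂ)) = ((Real.log (1/r) : ℝ) : ℂ) := by
    rw [show ((1:ℂ)/(r:ℂ)) = ((1/r : ℝ) : ℂ) by push_cast; ring,
      Complex.ofReal_log (by positivity)]
  have e3 : Complex.log (r:ℂ) = ((Real.log r : ℝ) : ℂ) := (Complex.ofReal_log hr.le).symm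
  rw [e2, e3, one_div, Real.log_inv]
  congr 1
  push_cast
  ring

lemma G_differentiable (α : ℂ) (hα : 0 < α.re) {z₀ : ℂ} (hz : 0 < z₀.re) :
    DifferentiableAt ℂ
      (fun z : ℂ => ∫ u in Ioi (0:ℝ), cpowR u (α-1) * Complex.exp (-(z * u))) z₀ := by
  set r := z₀.re with hr
  have hε : 0 < r/2 := half_pos hz
  have hcont : ∀ z : ℂ, ContinuousOn (fun u : ℝ => cpowR u (α-1) * Complex.exp (-(z * u)))
      (Ioi (0:ℝ)) := fun z x hx => (continuousAt_integrand hx.ne').continuousWithinAt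
  have main := hasDerivAt_integral_of_dominated_loc_of_deriv_le
    (μ := volume.restrict (Ioi (0:ℝ)))
    (F := fun (z : ℂ) (u : ℝ) => cpowR u (α-1) * Complex.exp (-(z * u)))
    (F' := fun (z : ℂ) (u : ℝ) => cpowR u (α-1) * (Complex.exp (-(z * u)) * -(u:ℂ)))
    (x₀ := z₀) (bound := fun u : ℝ => u ^ α.re * Real.exp (-((r/2) * u)))
    (Metric.ball_mem_nhds z₀ hε) ?_ ?_ ?_ ?_ ?_ ?_
  · exact main.2.differentiableAt
  · filter_upwards with z
    exact ContinuousOn.aestronglyMeasurable (hcont z) measurableSet_Ioi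
  · exact cInt_Ioi0 (by simp [Complex.sub_re]; linarith) hz
  · apply ContinuousOn.aestronglyMeasurable ?_ measurableSet_Ioi
    intro x hx
    refine ((continuousAt_cpowR hx.ne' (α-1)).mul ?_).continuousWithinAt
    refine ContinuousAt.mul ?_ ?_
    · exact Complex.continuous_exp.continuousAt.comp
        ((continuous_const.mul Complex.continuous_ofReal).neg.continuousAt)
    · exact (Complex.continuous_ofReal.neg).continuousAt
  · filter_upwards [ae_restrict_mem measurableSet_Ioi] with u hu
    intro x hx
    have hure : (0:ℝ) < u := hu
    have hxre : r/2 ≤ x.re := by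
      have h1 : dist x z₀ < r/2 := Metric.mem_ball.mp hx
      have h2 : |(x - z₀).re| ≤ ‖x - z₀‖ := Complex.abs_re_le_norm _
      rw [Complex.dist_eq] at h1
      have := abs_le.mp (le_of_lt (lt_of_le_of_lt h2 h1))
      simp only [Complex.sub_re] at this
      linarith [this.1]
    rw [norm_mul, norm_cpowR hure, norm_mul, norm_cexp, norm_neg]
    have hnu : ‖((u:ℝ):ℂ)‖ = u := by
      rw [Complex.norm_real, Real.norm_eq_abs, abs_of_pos hure]
    rw [hnu]
    have hre : (-(x * u)).re = -(x.re * u) := by simp [Complex.mul_re]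
    rw [hre]
    have e1 : u ^ (α-1).re * (Real.exp (-(x.re * u)) * u) =
        u ^ α.re * Real.exp (-(x.re * u)) := by
      rw [show (α-1).re = α.re - 1 by simp [Complex.sub_re]]
      rw [show u ^ (α.re - 1) * (Real.exp (-(x.re * u)) * u) =
        (u ^ (α.re - 1) * u ^ (1:ℝ)) * Real.exp (-(x.re * u)) by
          rw [Real.rpow_one]; ring]
      rw [← Real.rpow_add hure]
      ring_nf
    rw [e1]
    apply mul_le_mul_of_nonneg_left ?_ (Real.rpow_nonneg hure.le _)
    exact Real.exp_le_exp.mpr (by nlinarith)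
  · exact realInt_Ioi0 hε (by linarith)
  · filter_upwards [ae_restrict_mem measurableSet_Ioi] with u hu
    intro x hx
    have h1 : HasDerivAt (fun z : ℂ => -(z * (u:ℂ))) (-(u:ℂ)) x := by
      simpa using ((hasDerivAt_id x).mul_const ((u:ℝ):ℂ)).fun_neg
    exact (h1.cexp).const_mul (cpowR u (α-1))

lemma laplace (α : ℂ) (hα : 0 < α.re) {lam : ℂ} (hlam : 0 < lam.re) :
    ∫ u in Ioi (0:ℝ), cpowR u (α-1) * Complex.exp (-(lam * u)) =
      Complex.exp (-α * Complex.log lam) * Complex.Gamma α := by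
  set U : Set ℂ := {z | 0 < z.re} with hU
  have hUo : IsOpen U := isOpen_lt continuous_const Complex.continuous_re
  have hUc : IsPreconnected U := (convex_halfSpace_re_gt 0).isPreconnected
  set G := fun z : ℂ => ∫ u in Ioi (0:ℝ), cpowR u (α-1) * Complex.exp (-(z * u)) with hG0
  set H := fun z : ℂ => Complex.exp (-α * Complex.log z) * Complex.Gamma α with hH0
  have hG : AnalyticOnNhd ℂ G U := by
    apply DifferentiableOn.analyticOnNhd ?_ hUo
    intro z hz
    exact (G_differentiable α hα hz).differentiableWithinAt
  have hH : AnalyticOnNhd ℂ H U := by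
    apply DifferentiableOn.analyticOnNhd ?_ hUo
    intro z hz
    refine DifferentiableAt.differentiableWithinAt ?_
    apply DifferentiableAt.mul_const
    apply DifferentiableAt.cexp
    exact (Complex.differentiableAt_log (Or.inl hz)).const_mul (-α)
  have h1 : (1:ℂ) ∈ U := by simp [hU]
  have freq : ∃ᶠ z in nhdsWithin 1 {(1:ℂ)}ᶜ, G z = H z := by
    have hseq : Tendsto (fun n : ℕ => ((1 + 1/((n:ℝ)+1) : ℝ) : ℂ)) atTop
        (nhdsWithin 1 {(1:ℂ)}ᶜ) := by
      apply tendsto_nhdsWithin_of_tendsto_nhds_of_eventually_within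
      · have hr : Tendsto (fun n : ℕ => (1 + 1/((n:ℝ)+1) : ℝ)) atTop (nhds 1) := by
          simpa using (tendsto_const_nhds (x := (1:ℝ))).add (tendsto_one_div_add_atTop_nhds_zero_nat (𝕜 := ℝ))
        have := (Complex.continuous_ofReal.tendsto 1).comp hr
        simpa [Function.comp_def] using this
      · filter_upwards with n
        simp only [mem_compl_iff, mem_singleton_iff]
        intro h
        have h2 : (1 + 1/((n:ℝ)+1) : ℝ) = 1 := by exact_mod_cast h
        have h3 : (0:ℝ) < 1/((n:ℝ)+1) := by positivity
        linarith
    apply hseq.frequently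
    apply Frequently.of_forall
    intro n
    exact laplace_real α hα (by positivity)
  exact hG.eqOn_of_preconnected_of_frequently_eq hH hUc h1 freq hlam

lemma remainder_littleO {lam : ℂ} (hlam : 0 < lam.re) (β : ℂ) (hβ : β.re < 0) :
    (fun t : ℝ => Complex.exp (lam * t) *
        ∫ u in Ioi t, cpowR u β * Complex.exp (-(lam * u)))
      =o[atTop] fun t : ℝ => t ^ (β.re + 1) := by
  set r := lam.re with hr
  have hbound : ∀ t : ℝ, 1 ≤ t →
      ‖Complex.exp (lam * t) * ∫ u in Ioi t, cpowR u β * Complex.exp (-(lam * u))‖ ≤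
        t ^ β.re / r := by
    intro t ht1
    have ht : 0 < t := lt_of_lt_of_le one_pos ht1
    rw [norm_mul, norm_cexp]
    have hgint : IntegrableOn (fun u : ℝ => t ^ β.re * Real.exp (-(r * u))) (Ioi t) := by
      refine Integrable.const_mul ?_ _
      exact (by simpa [neg_mul] using exp_neg_integrableOn_Ioi t hlam :
        IntegrableOn (fun u : ℝ => Real.exp (-(r * u))) (Ioi t))
    have h1 : ‖∫ u in Ioi t, cpowR u β * Complex.exp (-(lam * u))‖ ≤
        ∫ u in Ioi t, t ^ β.re * Real.exp (-(r * u)) := by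
      refine (norm_integral_le_integral_norm _).trans ?_
      refine setIntegral_mono_on ((cInt_Ioi β hlam ht).norm) hgint measurableSet_Ioi ?_
      intro u hu
      have hut : t < u := hu
      rw [norm_integrand (lt_trans ht hut)]
      have := Real.rpow_le_rpow_of_nonpos ht (le_of_lt hut) hβ.le
      exact mul_le_mul_of_nonneg_right this (Real.exp_pos _).le
    have h2 : ∫ u in Ioi t, t ^ β.re * Real.exp (-(r * u)) =
        t ^ β.re * (Real.exp (-(r * t)) / r) := by
      rw [integral_const_mul, integral_exp_Ioi hlam]
    have h3 : (lam * (t:ℂ)).re = r * t := by simp [Complex.mul_re, hr]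
    calc Real.exp ((lam * (t:ℂ)).re) * ‖∫ u in Ioi t, cpowR u β * Complex.exp (-(lam * u))‖
        ≤ Real.exp (r * t) * (t ^ β.re * (Real.exp (-(r * t)) / r)) := by
          rw [h3, ← h2]
          exact mul_le_mul_of_nonneg_left h1 (Real.exp_pos _).le
      _ = t ^ β.re / r := by
          rw [Real.exp_neg]
          field_simp
  rw [isLittleO_iff]
  intro ε hε
  filter_upwards [eventually_ge_atTop (max 1 (1/(r*ε)))] with t ht
  have ht1 : 1 ≤ t := le_trans (le_max_left _ _) ht
  have htε : 1/(r*ε) ≤ t := le_trans (le_max_right _ _) ht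
  have ht0 : 0 < t := lt_of_lt_of_le one_pos ht1
  refine (hbound t ht1).trans ?_
  have hnorm : ‖t ^ (β.re + 1)‖ = t ^ (β.re + 1) :=
    abs_of_pos (Real.rpow_pos_of_pos ht0 _)
  rw [Real.norm_eq_abs] at *
  rw [hnorm, Real.rpow_add_one ht0.ne']
  have hrε : 1 ≤ t * (r * ε) := (div_le_iff₀ (by positivity)).mp htε
  rw [div_le_iff₀ hlam]
  have hpos : 0 < t ^ β.re := Real.rpow_pos_of_pos ht0 _
  calc t ^ β.re = t ^ β.re * 1 := by ring
    _ ≤ t ^ β.re * (t * (r * ε)) := by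
        exact mul_le_mul_of_nonneg_left hrε hpos.le
    _ = ε * (t ^ β.re * t) * r := by ring

lemma key_eq (α lam : ℂ) (hα : 0 < α.re) (hlam : 0 < lam.re) (L : ℕ)
    {t : ℝ} (ht : 0 < t) :
    RL α (fun x : ℝ => Complex.exp (lam * x)) t -
        (Complex.exp (-α * Complex.log lam) * Complex.exp (lam * t) -
          ∑ l ∈ Finset.Icc 1 L,
            (Complex.Gamma (α - l + 1))⁻¹ * (lam ^ l)⁻¹ * cpowR t (α - l)) =
      (-(Complex.Gamma α)⁻¹ * cc α (L + 1) * (lam ^ L)⁻¹) *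
        (Complex.exp (lam * t) *
          ∫ u in Ioi t, cpowR u (α - 1 - L) * Complex.exp (-(lam * u))) := by
  have hΓ : Complex.Gamma α ≠ 0 := by
    apply Complex.Gamma_ne_zero
    intro m h
    rw [h] at hα
    simp only [Complex.neg_re, Complex.natCast_re] at hα
    have : (0:ℝ) ≤ (m:ℝ) := Nat.cast_nonneg m
    linarith
  -- Step 1: rewrite RL
  have hRL : RL α (fun x : ℝ => Complex.exp (lam * x)) t =
      (Complex.exp (lam * t) * (Complex.Gamma α)⁻¹) *
        ∫ u in Ioc 0 t, cpowR u (α - 1) * Complex.exp (-(lam * u)) := by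
    have e0 : (fun x : ℝ => Complex.exp (lam * x) * cpowR (t - x) (α - 1) / Complex.Gamma α) =
        (fun x : ℝ => (fun u : ℝ =>
          Complex.exp (lam * ((t - u : ℝ) : ℂ)) * cpowR u (α - 1) / Complex.Gamma α) (t - x)) := by
      funext x
      simp [sub_sub_cancel]
    rw [RL, e0, intervalIntegral.integral_comp_sub_left
      (fun u : ℝ => Complex.exp (lam * ((t - u : ℝ) : ℂ)) * cpowR u (α - 1) / Complex.Gamma α) t,
      sub_zero, sub_self]
    have e2 : ∀ u : ℝ, Complex.exp (lam * ((t - u : ℝ) : ℂ)) * cpowR u (α - 1) / Complex.Gamma α =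
        (Complex.exp (lam * t) * (Complex.Gamma α)⁻¹) *
          (cpowR u (α - 1) * Complex.exp (-(lam * u))) := by
      intro u
      rw [show (lam * ((t - u : ℝ) : ℂ)) = lam * t + -(lam * u) by push_cast; ring,
        Complex.exp_add]
      rw [div_eq_mul_inv]
      ring
    simp only [e2]
    rw [intervalIntegral.integral_const_mul, intervalIntegral.integral_of_le ht.le]
  -- Step 2: split the integral
  have hsplit : ∫ u in Ioc 0 t, cpowR u (α - 1) * Complex.exp (-(lam * u)) =
      (∫ u in Ioi (0:ℝ), cpowR u (α - 1) * Complex.exp (-(lam * u))) -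
        ∫ u in Ioi t, cpowR u (α - 1) * Complex.exp (-(lam * u)) := by
    have hβ : -1 < (α - 1).re := by
      simp only [Complex.sub_re, Complex.one_re]
      linarith
    have hu := setIntegral_union (Ioc_disjoint_Ioi (le_refl t)) measurableSet_Ioi
      ((cInt_Ioi0 hβ hlam).mono_set Ioc_subset_Ioi_self) (cInt_Ioi (α - 1) hlam ht)
    rw [Ioc_union_Ioi_eq_Ioi ht.le] at hu
    linear_combination hu.symm
  rw [hRL, hsplit, laplace α hα hlam, expansion α hlam ht L]
  -- final algebra
  have hET : Complex.exp (lam * t) * Complex.exp (-(lam * t)) = 1 := by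
    rw [← Complex.exp_add]
    simp
  have hΓΓ : (Complex.Gamma α)⁻¹ * Complex.Gamma α = 1 := inv_mul_cancel₀ hΓ
  have hS : (Complex.Gamma α)⁻¹ *
      ∑ l ∈ Finset.Icc 1 L, cc α l * (lam ^ l)⁻¹ * cpowR t (α - l) =
      ∑ l ∈ Finset.Icc 1 L,
        (Complex.Gamma (α - l + 1))⁻¹ * (lam ^ l)⁻¹ * cpowR t (α - l) := by
    rw [Finset.mul_sum]
    refine Finset.sum_congr rfl fun l hl => ?_
    rw [← mul_assoc, ← mul_assoc, coeff α l (Finset.mem_Icc.mp hl).1]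
  linear_combination (Complex.exp (lam * t) * Complex.exp (-α * Complex.log lam)) * hΓΓ +
    (-1 : ℂ) * hS - ((Complex.Gamma α)⁻¹ *
      ∑ l ∈ Finset.Icc 1 L, cc α l * (lam ^ l)⁻¹ * cpowR t (α - l)) * hET

end Stmt3Aux

open Stmt3Aux in
theorem stmt3 (α lam : ℂ) (hα : 0 < α.re) (hlam : 0 < lam.re)
    (L : ℕ) (hL : α.re - 1 < L) :
    (fun t : ℝ => RL α (fun x : ℝ => Complex.exp (lam * x)) t -
        (Complex.exp (-α * Complex.log lam) * Complex.exp (lam * t) -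
          ∑ l ∈ Finset.Icc 1 L,
            (Complex.Gamma (α - l + 1))⁻¹ * (lam ^ l)⁻¹ * cpowR t (α - l)))
      =o[Filter.atTop] fun t : ℝ => t ^ (α.re - L) := by
  have hβ : (α - 1 - (L:ℂ)).re < 0 := by
    simp only [Complex.sub_re, Complex.one_re, Complex.natCast_re]
    linarith
  have ho := (remainder_littleO hlam (α - 1 - (L:ℂ)) hβ).const_mul_left
    (-(Complex.Gamma α)⁻¹ * cc α (L + 1) * (lam ^ L)⁻¹)
  refine ho.congr' ?_ ?_
  · filter_upwards [eventually_gt_atTop (0:ℝ)] with t ht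
    exact (key_eq α lam hα hlam L ht).symm
  · filter_upwards with t
    congr 1
    simp only [Complex.sub_re, Complex.one_re, Complex.natCast_re]
    ring
end

section
/- Let β ∈ ℂ with Re β > 0 and let f : [0, ∞) → ℂ be continuous with lim_{t→+∞} e^(−t)·f(t) = 0. Then lim_{t→+∞} e^(−t)·I_β⟨f⟩(t) = 0. -/
open MeasureTheory Filter Set intervalIntegral

theorem stmt5 (β : ℂ) (hβ : 0 < β.re) (f : ℝ → ℂ) (hf : ContinuousOn f (Set.Ici 0))
    (hlim : Filter.Tendsto (fun t : ℝ => Complex.exp (-(t : ℂ)) * f t)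
      Filter.atTop (nhds 0)) :
    Filter.Tendsto (fun t : ℝ => Complex.exp (-(t : ℂ)) * RL β f t)
      Filter.atTop (nhds 0) := by
  set g : ℝ → ℂ := fun x => Complex.exp (-(x : ℂ)) * f x with hg_def
  set k : ℝ → ℝ := fun s => Real.exp (-s) * s ^ (β.re - 1) with hk_def
  have hk_int : IntegrableOn k (Set.Ioi 0) := Real.GammaIntegral_convergent hβ
  have hk_nonneg : ∀ s : ℝ, 0 ≤ s → 0 ≤ k s := fun s hs =>
    mul_nonneg (Real.exp_nonneg _) (Real.rpow_nonneg hs _)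
  have hg_cont : ContinuousOn g (Set.Ici 0) :=
    ((Complex.continuous_exp.comp (continuous_neg.comp Complex.continuous_ofReal)).continuousOn).mul hf
  -- global bound for ‖g‖ on [0, ∞)
  obtain ⟨B, hB⟩ := Metric.tendsto_atTop.1 hlim 1 one_pos
  obtain ⟨C, hC⟩ := (isCompact_Icc (a := (0:ℝ)) (b := B)).exists_bound_of_continuousOn
    (hg_cont.mono (Set.Icc_subset_Ici_self))
  set M : ℝ := max C 1 with hM_def
  have hM_pos : (0:ℝ) < M := lt_of_lt_of_le one_pos (le_max_right _ _)
  have hgM : ∀ x : ℝ, 0 ≤ x → ‖g x‖ ≤ M := by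
    intro x hx
    rcases le_or_gt x B with h | h
    · exact (hC x ⟨hx, h⟩).trans (le_max_left _ _)
    · have h2 := hB x h.le
      rw [dist_zero_right] at h2
      exact h2.le.trans (le_max_right _ _)
  -- total mass of the kernel
  set K : ℝ := ∫ s in Set.Ioi (0:ℝ), k s with hK_def
  have hK0 : 0 ≤ K := setIntegral_nonneg measurableSet_Ioi fun s hs => hk_nonneg s (le_of_lt hs)
  -- tail of the kernel tends to 0
  have htail : Tendsto (fun A : ℝ => ∫ s in Set.Ioi A, k s) atTop (nhds 0) := by
    have h1 : Tendsto (fun A : ℝ => ∫ s in (0:ℝ)..A, k s) atTop (nhds K) :=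
      intervalIntegral_tendsto_integral_Ioi 0 hk_int tendsto_id
    have h2 : (fun A : ℝ => ∫ s in Set.Ioi A, k s)
        =ᶠ[atTop] fun A => K - ∫ s in (0:ℝ)..A, k s := by
      filter_upwards [eventually_ge_atTop (0:ℝ)] with A hA
      have hsplit : K = (∫ s in Set.Ioc 0 A, k s) + ∫ s in Set.Ioi A, k s := by
        rw [hK_def, ← Set.Ioc_union_Ioi_eq_Ioi hA]
        exact setIntegral_union (Set.Ioc_disjoint_Ioi le_rfl) measurableSet_Ioi
          (hk_int.mono_set Set.Ioc_subset_Ioi_self) (hk_int.mono_set (Set.Ioi_subset_Ioi hA))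
      rw [intervalIntegral.integral_of_le hA]
      linarith
    have h3 := h1.const_sub K
    rw [sub_self] at h3
    exact h3.congr' h2.symm
  -- norm of the kernel term
  have hnorm : ∀ s : ℝ, 0 < s →
      ‖Complex.exp (-(s : ℂ)) * cpowR s (β - 1)‖ = k s := by
    intro s hs
    have h1 : (-(s:ℂ)).re = -s := by simp
    have h2 : ((β - 1) * (Real.log s : ℂ)).re = Real.log s * (β.re - 1) := by
      simp only [Complex.mul_re, Complex.ofReal_re, Complex.ofReal_im, mul_zero, sub_zero,
        Complex.sub_re, Complex.one_re]
      ring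
    simp only [hk_def]
    rw [cpowR, norm_mul, Complex.norm_exp,
      Complex.norm_exp, h1, h2, Real.rpow_def_of_pos hs]
  -- interval integrability of the kernel
  have hki : ∀ t : ℝ, 0 ≤ t → IntervalIntegrable (fun x => k (t - x)) volume 0 t := by
    intro t ht
    have h1 : IntervalIntegrable k volume 0 t := by
      rw [intervalIntegrable_iff_integrableOn_Ioc_of_le ht]
      exact hk_int.mono_set Set.Ioc_subset_Ioi_self
    have h2 := (h1.comp_sub_left t).symm
    simpa using h2
  -- interval integrability of the full integrand
  have hgi : ∀ t : ℝ, 0 ≤ t →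
      IntervalIntegrable (fun x => k (t - x) * ‖g x‖) volume 0 t := by
    intro t ht
    rw [intervalIntegrable_iff_integrableOn_Ioc_of_le ht]
    have h1 : IntegrableOn (fun x => k (t - x)) (Set.Ioc 0 t) := by
      rw [← intervalIntegrable_iff_integrableOn_Ioc_of_le ht]
      exact hki t ht
    have h2 : AEStronglyMeasurable (fun x => ‖g x‖) (volume.restrict (Set.Ioc 0 t)) :=
      ((hg_cont.mono fun x hx => le_of_lt hx.1).norm).aestronglyMeasurable measurableSet_Ioc
    have h3 : ∀ᵐ x ∂(volume.restrict (Set.Ioc 0 t)), ‖‖g x‖‖ ≤ M := by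
      filter_upwards [ae_restrict_mem measurableSet_Ioc] with x hx
      rw [norm_norm]
      exact hgM x hx.1.le
    have h4 := h1.bdd_mul h2 h3
    exact h4.congr (Filter.Eventually.of_forall fun x => mul_comm _ _)
  -- the main pointwise bound
  have hbound : ∀ t : ℝ, 0 ≤ t → ‖Complex.exp (-(t : ℂ)) * RL β f t‖ ≤
      ‖Complex.Gamma β‖⁻¹ * ∫ x in (0:ℝ)..t, k (t - x) * ‖g x‖ := by
    intro t ht
    rw [RL, ← intervalIntegral.integral_const_mul]
    calc ‖∫ x in (0:ℝ)..t, Complex.exp (-(t : ℂ)) *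
            (f x * cpowR (t - x) (β - 1) / Complex.Gamma β)‖
        ≤ ∫ x in (0:ℝ)..t, ‖Complex.exp (-(t : ℂ)) *
            (f x * cpowR (t - x) (β - 1) / Complex.Gamma β)‖ :=
          intervalIntegral.norm_integral_le_integral_norm ht
      _ = ‖Complex.Gamma β‖⁻¹ * ∫ x in (0:ℝ)..t, k (t - x) * ‖g x‖ := by
          rw [intervalIntegral.integral_of_le ht, intervalIntegral.integral_of_le ht,
            integral_Ioc_eq_integral_Ioo, integral_Ioc_eq_integral_Ioo,
            ← MeasureTheory.integral_const_mul]
          apply setIntegral_congr_fun measurableSet_Ioo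
          intro x hx
          beta_reduce
          have hx0 : (0:ℝ) < x := hx.1
          have hxt : x < t := hx.2
          have hsplit : Complex.exp (-(t : ℂ)) =
              Complex.exp (-(x : ℂ)) * Complex.exp (-((t - x : ℝ) : ℂ)) := by
            rw [← Complex.exp_add]
            congr 1
            push_cast
            ring
          have hre : (Complex.exp (-(x : ℂ)) * Complex.exp (-((t - x : ℝ) : ℂ))) *
              (f x * cpowR (t - x) (β - 1) / Complex.Gamma β) =
              (Complex.exp (-((t - x : ℝ) : ℂ)) * cpowR (t - x) (β - 1)) * g x
                / Complex.Gamma β := by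
            rw [hg_def]
            ring
          rw [hsplit, hre, norm_div, norm_mul, hnorm (t - x) (by linarith)]
          ring
  -- the comparison function tends to zero
  have hP : Tendsto (fun t : ℝ => ∫ x in (0:ℝ)..t, k (t - x) * ‖g x‖) atTop (nhds 0) := by
    rw [Metric.tendsto_atTop]
    intro ε hε
    have hM1 : (0:ℝ) < M + 1 := by linarith
    have hK1 : (0:ℝ) < K + 1 := by linarith
    set ε₁ : ℝ := ε / (2 * (M + 1)) with hε₁_def
    set ε₂ : ℝ := ε / (2 * (K + 1)) with hε₂_def
    have hε₁ : 0 < ε₁ := div_pos hε (by linarith)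
    have hε₂ : 0 < ε₂ := div_pos hε (by linarith)
    obtain ⟨A₁', hA₁'⟩ := Metric.tendsto_atTop.1 hlim ε₂ hε₂
    set A₁ : ℝ := max A₁' 0 with hA₁_def
    have hA₁0 : 0 ≤ A₁ := le_max_right _ _
    have hgε₂ : ∀ x : ℝ, A₁ ≤ x → ‖g x‖ ≤ ε₂ := by
      intro x hx
      have h2 := hA₁' x (le_trans (le_max_left _ _) hx)
      rw [dist_zero_right] at h2
      exact h2.le
    obtain ⟨A₂', hA₂'⟩ := Metric.tendsto_atTop.1 htail ε₁ hε₁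
    set A₂ : ℝ := max A₂' 0 with hA₂_def
    have htailε : ∀ B : ℝ, A₂ ≤ B → ∫ s in Set.Ioi B, k s ≤ ε₁ := by
      intro B hB
      have h2 := hA₂' B (le_trans (le_max_left _ _) hB)
      rw [dist_zero_right, Real.norm_eq_abs] at h2
      exact (le_abs_self _).trans h2.le
    refine ⟨A₁ + A₂ + 1, fun t ht => ?_⟩
    have ht0 : (0:ℝ) ≤ t := by
      have := le_max_right A₂' 0
      linarith [le_max_right A₁' (0:ℝ)]
    have htA1 : A₁ ≤ t := by linarith [le_max_right A₂' (0:ℝ)]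
    have htA2 : A₂ + 1 ≤ t - A₁ := by linarith
    have htA2' : (0:ℝ) < t - A₁ := by linarith [le_max_right A₂' (0:ℝ)]
    -- integrability pieces
    have hsub1 : Set.uIcc (0:ℝ) A₁ ⊆ Set.uIcc (0:ℝ) t := by
      rw [Set.uIcc_of_le hA₁0, Set.uIcc_of_le ht0]
      exact Set.Icc_subset_Icc le_rfl htA1
    have hsub2 : Set.uIcc A₁ t ⊆ Set.uIcc (0:ℝ) t := by
      rw [Set.uIcc_of_le htA1, Set.uIcc_of_le ht0]
      exact Set.Icc_subset_Icc hA₁0 le_rfl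
    have hint1 := (hgi t ht0).mono_set hsub1
    have hint2 := (hgi t ht0).mono_set hsub2
    have hkint1 := (hki t ht0).mono_set hsub1
    have hkint2 := (hki t ht0).mono_set hsub2
    have hsplit : (∫ x in (0:ℝ)..t, k (t - x) * ‖g x‖) =
        (∫ x in (0:ℝ)..A₁, k (t - x) * ‖g x‖) + ∫ x in A₁..t, k (t - x) * ‖g x‖ :=
      (intervalIntegral.integral_add_adjacent_intervals hint1 hint2).symm
    -- piece 1
    have hp1 : (∫ x in (0:ℝ)..A₁, k (t - x) * ‖g x‖) ≤ M * ε₁ := by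
      have h1 : (∫ x in (0:ℝ)..A₁, k (t - x) * ‖g x‖) ≤
          ∫ x in (0:ℝ)..A₁, M * k (t - x) := by
        apply intervalIntegral.integral_mono_on hA₁0 hint1 (hkint1.const_mul M)
        intro x hx
        have hknn : 0 ≤ k (t - x) := hk_nonneg _ (by linarith [hx.2])
        calc k (t - x) * ‖g x‖ ≤ k (t - x) * M :=
              mul_le_mul_of_nonneg_left (hgM x hx.1) hknn
          _ = M * k (t - x) := mul_comm _ _
      have h2 : (∫ x in (0:ℝ)..A₁, k (t - x)) ≤ ε₁ := by
        have h3 : (∫ x in (0:ℝ)..A₁, k (t - x)) = ∫ s in (t - A₁)..t, k s := by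
          rw [intervalIntegral.integral_comp_sub_left k t]
          norm_num
        rw [h3, intervalIntegral.integral_of_le (by linarith)]
        have h4 : (∫ s in Set.Ioc (t - A₁) t, k s) ≤ ∫ s in Set.Ioi (t - A₁), k s := by
          refine setIntegral_mono_set (hk_int.mono_set (Set.Ioi_subset_Ioi (by linarith))) ?_
            (HasSubset.Subset.eventuallyLE Set.Ioc_subset_Ioi_self)
          filter_upwards [ae_restrict_mem measurableSet_Ioi] with s hs
          exact hk_nonneg s (le_of_lt (lt_trans htA2' hs))
        exact h4.trans (htailε (t - A₁) (by linarith))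
      calc (∫ x in (0:ℝ)..A₁, k (t - x) * ‖g x‖) ≤ ∫ x in (0:ℝ)..A₁, M * k (t - x) := h1
        _ = M * ∫ x in (0:ℝ)..A₁, k (t - x) := intervalIntegral.integral_const_mul _ _
        _ ≤ M * ε₁ := mul_le_mul_of_nonneg_left h2 hM_pos.le
    -- piece 2
    have hp2 : (∫ x in A₁..t, k (t - x) * ‖g x‖) ≤ ε₂ * K := by
      have h1 : (∫ x in A₁..t, k (t - x) * ‖g x‖) ≤
          ∫ x in A₁..t, ε₂ * k (t - x) := by
        apply intervalIntegral.integral_mono_on htA1 hint2 (hkint2.const_mul ε₂)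
        intro x hx
        have hknn : 0 ≤ k (t - x) := hk_nonneg _ (by linarith [hx.2])
        calc k (t - x) * ‖g x‖ ≤ k (t - x) * ε₂ :=
              mul_le_mul_of_nonneg_left (hgε₂ x hx.1) hknn
          _ = ε₂ * k (t - x) := mul_comm _ _
      have h2 : (∫ x in A₁..t, k (t - x)) ≤ K := by
        have h3 : (∫ x in A₁..t, k (t - x)) = ∫ s in (0:ℝ)..(t - A₁), k s := by
          rw [intervalIntegral.integral_comp_sub_left k t]
          norm_num
        rw [h3, intervalIntegral.integral_of_le (by linarith)]
        refine setIntegral_mono_set hk_int ?_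
          (HasSubset.Subset.eventuallyLE Set.Ioc_subset_Ioi_self)
        filter_upwards [ae_restrict_mem measurableSet_Ioi] with s hs
        exact hk_nonneg s (le_of_lt hs)
      calc (∫ x in A₁..t, k (t - x) * ‖g x‖) ≤ ∫ x in A₁..t, ε₂ * k (t - x) := h1
        _ = ε₂ * ∫ x in A₁..t, k (t - x) := intervalIntegral.integral_const_mul _ _
        _ ≤ ε₂ * K := mul_le_mul_of_nonneg_left h2 hε₂.le
    -- combine
    have hPnn : (0:ℝ) ≤ ∫ x in (0:ℝ)..t, k (t - x) * ‖g x‖ := by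
      apply intervalIntegral.integral_nonneg ht0
      intro x hx
      exact mul_nonneg (hk_nonneg _ (by linarith [hx.2])) (norm_nonneg _)
    rw [Real.dist_eq, sub_zero, abs_of_nonneg hPnn, hsplit]
    have hb1 : M * ε₁ < ε / 2 := by
      have hεeq : ε₁ * (2 * (M + 1)) = ε := div_mul_cancel₀ ε (by positivity)
      nlinarith
    have hb2 : ε₂ * K < ε / 2 := by
      have hεeq : ε₂ * (2 * (K + 1)) = ε := div_mul_cancel₀ ε (by positivity)
      nlinarith
    linarith
  -- conclude by squeezing
  have h2 : Tendsto (fun t : ℝ =>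
      ‖Complex.Gamma β‖⁻¹ * ∫ x in (0:ℝ)..t, k (t - x) * ‖g x‖) atTop (nhds 0) := by
    simpa using hP.const_mul (‖Complex.Gamma β‖⁻¹)
  exact squeeze_zero_norm'
    (by filter_upwards [eventually_ge_atTop (0:ℝ)] with t ht using hbound t ht) h2
end

section
/- Let r ≥ 1 be an integer and let β ∈ ℂ with Re β > −1. Then the modified Mittag-Leffler series satisfies lim_{t→+∞} e^(−t)·∑_{m=0}^∞ t^(r·m+β)/Γ(1 + r·m + β) = 1/r, where t^(r·m+β) := exp((r·m+β)·log t) for t > 0 and Γ is the complex Gamma function. -/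
open Filter Complex Set MeasureTheory
open scoped Topology Real

namespace MLaux

lemma norm_cpowR {t : ℝ} (ht : 0 < t) (w : ℂ) : ‖cpowR t w‖ = t ^ w.re := by
  rw [cpowR, Complex.norm_exp, Real.rpow_def_of_pos ht]
  congr 1
  simp [Complex.mul_re]
  ring

lemma hasDerivAt_cpowR {t : ℝ} (ht : 0 < t) (w : ℂ) :
    HasDerivAt (fun x : ℝ => cpowR x w) (w * cpowR t (w - 1)) t := by
  have h0 : HasDerivAt (fun x : ℝ => (Real.log x : ℂ)) ((t⁻¹ : ℝ) : ℂ) t :=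
    (Real.hasDerivAt_log ht.ne').ofReal_comp
  have h2 := (h0.const_mul w).cexp
  convert h2 using 1
  rfl
  simp only [cpowR]
  rw [sub_mul, one_mul, Complex.exp_sub]
  have h3 : Complex.exp ((Real.log t : ℂ)) = (t : ℂ) := by
    rw [← Complex.ofReal_exp, Real.exp_log ht]
  rw [h3]
  have ht0 : (t : ℂ) ≠ 0 := by exact_mod_cast ht.ne'
  push_cast
  field_simp

lemma continuousOn_cpowR (w : ℂ) : ContinuousOn (fun x : ℝ => cpowR x w) (Ioi 0) :=
  fun x hx => ((hasDerivAt_cpowR hx w).continuousAt).continuousWithinAt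

lemma Gamma_ne_zero_of_re_pos {s : ℂ} (hs : 0 < s.re) : Complex.Gamma s ≠ 0 := by
  apply Complex.Gamma_ne_zero
  intro m h
  rw [h] at hs
  simp only [Complex.neg_re, Complex.natCast_re] at hs
  have := Nat.cast_nonneg (α := ℝ) m
  linarith

lemma arg_re_pos {β : ℂ} (hβ : -1 < β.re) (n : ℕ) : 0 < ((n : ℂ) + β + 1).re := by
  simp only [Complex.add_re, Complex.natCast_re, Complex.one_re]
  have := Nat.cast_nonneg (α := ℝ) n
  linarith

lemma arg_ne_zero {β : ℂ} (hβ : -1 < β.re) (n : ℕ) : ((n : ℂ) + β + 1) ≠ 0 := by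
  intro h
  have := arg_re_pos hβ n
  rw [h] at this; simp at this

/-- master summability -/
lemma summable_master {β : ℂ} (hβ : -1 < β.re) {C : ℝ} (hC : 0 ≤ C) :
    Summable (fun n : ℕ =>
      ((n : ℝ) + ‖β‖ + 1) * C ^ n * ‖Complex.Gamma ((n : ℂ) + β + 1)‖⁻¹) := by
  set A := ‖β‖ with hA
  have hA0 : 0 ≤ A := norm_nonneg _
  apply summable_of_ratio_norm_eventually_le (r := 1/2) (by norm_num)
  have hev : ∀ᶠ n : ℕ in atTop, (2*A ≤ (n:ℝ) + 1 ∧ 8*C ≤ (n:ℝ) + 1) := by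
    filter_upwards [eventually_ge_atTop (⌈2*A⌉₊ + ⌈8*C⌉₊)] with n hn
    have h1 : (⌈2*A⌉₊ : ℝ) ≤ n := by exact_mod_cast le_trans (Nat.le_add_right _ _) hn
    have h2 : (⌈8*C⌉₊ : ℝ) ≤ n := by exact_mod_cast le_trans (Nat.le_add_left _ _) hn
    have h3 := Nat.le_ceil (2*A)
    have h4 := Nat.le_ceil (8*C)
    constructor <;> linarith
  filter_upwards [hev] with n hn
  obtain ⟨hn1, hn2⟩ := hn
  set g : ℕ → ℝ := fun k => ‖Complex.Gamma ((k : ℂ) + β + 1)‖⁻¹ with hg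
  have hgrec : g (n+1) = ‖(n : ℂ) + β + 1‖⁻¹ * g n := by
    have harg : (((n+1 : ℕ)) : ℂ) + β + 1 = ((n : ℂ) + β + 1) + 1 := by push_cast; ring
    simp only [hg]
    rw [harg, Complex.Gamma_add_one _ (arg_ne_zero hβ n), norm_mul, mul_inv]
  set w := ‖(n : ℂ) + β + 1‖ with hwdef
  have hw : ((n:ℝ) + 1) / 2 ≤ w := by
    have h1 : ‖((n : ℂ) + 1)‖ = (n:ℝ) + 1 := by
      rw [show ((n:ℂ)+1) = ((n+1 : ℕ) : ℂ) by push_cast; ring, Complex.norm_natCast]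
      push_cast; ring
    have h2 : ‖((n : ℂ) + 1)‖ ≤ w + ‖β‖ := by
      calc ‖((n : ℂ) + 1)‖ = ‖((n : ℂ) + β + 1) + (-β)‖ := by ring_nf
        _ ≤ w + ‖(-β)‖ := norm_add_le _ _
        _ = w + ‖β‖ := by rw [norm_neg]
    rw [h1] at h2
    linarith
  have hwpos : 0 < w := lt_of_lt_of_le (by positivity) hw
  have hwinv : w⁻¹ ≤ 2/((n:ℝ)+1) := by
    have h := inv_anti₀ (by positivity : (0:ℝ) < ((n:ℝ)+1)/2) hw
    rwa [show (((n:ℝ)+1)/2)⁻¹ = 2/((n:ℝ)+1) by field_simp] at h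
  have hgn : 0 ≤ g n := by positivity
  have hCn : 0 ≤ C^n := by positivity
  have hnn : (0:ℝ) ≤ (n:ℝ) := Nat.cast_nonneg n
  rw [Real.norm_of_nonneg (by positivity), Real.norm_of_nonneg (by positivity)]
  have hkey : ((n:ℝ)+A+2)*C*w⁻¹ ≤ 1/2*((n:ℝ)+A+1) := by
    have step1 : ((n:ℝ)+A+2)*C*w⁻¹ ≤ ((n:ℝ)+A+2)*C*(2/((n:ℝ)+1)) := by
      apply mul_le_mul_of_nonneg_left hwinv (by positivity)
    have h1 : (0:ℝ) < (n:ℝ)+1 := by positivity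
    have step2 : ((n:ℝ)+A+2)*C*(2/((n:ℝ)+1)) ≤ 1/2*((n:ℝ)+A+1) := by
      rw [show ((n:ℝ)+A+2)*C*(2/((n:ℝ)+1)) = (2*C*((n:ℝ)+A+2))/((n:ℝ)+1) by ring,
        div_le_iff₀ h1]
      nlinarith [mul_nonneg hC hA0, mul_nonneg hC hnn,
        mul_le_mul_of_nonneg_left hn2 (by positivity : (0:ℝ) ≤ 1/2*((n:ℝ)+A+1))]
    linarith
  calc (((n+1 : ℕ) : ℝ) + A + 1) * C^(n+1) * g (n+1)
      = (((n:ℝ)+A+2)*C*w⁻¹) * (C^n * g n) := by rw [hgrec]; push_cast; ring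
    _ ≤ (1/2*((n:ℝ)+A+1)) * (C^n * g n) :=
        mul_le_mul_of_nonneg_right hkey (by positivity)
    _ = 1/2 * (((n:ℝ)+A+1) * C^n * g n) := by ring


/-- The auxiliary series. -/
noncomputable def S (z β : ℂ) (t : ℝ) : ℂ :=
  ∑' n : ℕ, z ^ n * cpowR t ((n : ℂ) + β) / Complex.Gamma ((n : ℂ) + β + 1)

lemma norm_term {β z : ℂ} (hβ : -1 < β.re) (hz : ‖z‖ ≤ 1) {t : ℝ} (ht : 0 < t) (n : ℕ) :
    ‖z ^ n * cpowR t ((n : ℂ) + β) / Complex.Gamma ((n : ℂ) + β + 1)‖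
      ≤ t ^ β.re * (((n : ℝ) + ‖β‖ + 1) * t ^ n * ‖Complex.Gamma ((n : ℂ) + β + 1)‖⁻¹) := by
  rw [norm_div, norm_mul, norm_pow, norm_cpowR ht]
  have h1 : ‖z‖ ^ n ≤ 1 := pow_le_one₀ (norm_nonneg z) hz
  have h2 : t ^ (((n : ℂ) + β).re) = t ^ (n : ℕ) * t ^ β.re := by
    rw [show ((n : ℂ) + β).re = (n : ℝ) + β.re by simp,
      Real.rpow_add ht, Real.rpow_natCast]
  rw [h2, div_eq_mul_inv]
  have hg : (0:ℝ) ≤ ‖Complex.Gamma ((n : ℂ) + β + 1)‖⁻¹ := by positivity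
  have htn : (0:ℝ) ≤ t ^ n := by positivity
  have htb : (0:ℝ) ≤ t ^ β.re := by positivity
  calc ‖z‖ ^ n * (t ^ n * t ^ β.re) * ‖Complex.Gamma ((n : ℂ) + β + 1)‖⁻¹
      ≤ 1 * (t ^ n * t ^ β.re) * ‖Complex.Gamma ((n : ℂ) + β + 1)‖⁻¹ := by
        apply mul_le_mul_of_nonneg_right (mul_le_mul_of_nonneg_right h1 (by positivity)) hg
    _ = t ^ β.re * (1 * t ^ n * ‖Complex.Gamma ((n : ℂ) + β + 1)‖⁻¹) := by ring
    _ ≤ t ^ β.re * (((n : ℝ) + ‖β‖ + 1) * t ^ n * ‖Complex.Gamma ((n : ℂ) + β + 1)‖⁻¹) := by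
        apply mul_le_mul_of_nonneg_left _ htb
        apply mul_le_mul_of_nonneg_right (mul_le_mul_of_nonneg_right _ htn) hg
        have := norm_nonneg β
        have := Nat.cast_nonneg (α := ℝ) n
        linarith

lemma summable_norm_S {β z : ℂ} (hβ : -1 < β.re) (hz : ‖z‖ ≤ 1) {t : ℝ} (ht : 0 < t) :
    Summable (fun n : ℕ =>
      ‖z ^ n * cpowR t ((n : ℂ) + β) / Complex.Gamma ((n : ℂ) + β + 1)‖) := by
  apply Summable.of_nonneg_of_le (fun n => norm_nonneg _) (norm_term hβ hz ht)
  exact ((summable_master hβ ht.le).mul_left _)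

lemma summable_S {β z : ℂ} (hβ : -1 < β.re) (hz : ‖z‖ ≤ 1) {t : ℝ} (ht : 0 < t) :
    Summable (fun n : ℕ =>
      z ^ n * cpowR t ((n : ℂ) + β) / Complex.Gamma ((n : ℂ) + β + 1)) :=
  (summable_norm_S hβ hz ht).of_norm

lemma S_succ {β z : ℂ} (hβ : -1 < β.re) (hz : ‖z‖ ≤ 1) {t : ℝ} (ht : 0 < t) :
    S z β t = cpowR t β / Complex.Gamma (β + 1) + z * S z (β + 1) t := by
  rw [S, Summable.tsum_eq_zero_add (summable_S hβ hz ht)]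
  congr 1
  · norm_num
  · rw [S, ← tsum_mul_left]
    apply tsum_congr
    intro n
    have e1 : (((n+1 : ℕ)) : ℂ) + β = (n : ℂ) + (β + 1) := by push_cast; ring
    rw [e1, pow_succ]
    ring

lemma hasDerivAt_S {β z : ℂ} (hβ : 0 < β.re) (hz : ‖z‖ ≤ 1) {t : ℝ} (ht : 0 < t) :
    HasDerivAt (S z β) (S z (β - 1) t) t := by
  have hβ' : -1 < β.re := by linarith
  set K : ℝ := max ((t/2) ^ (β.re - 1)) ((t+1) ^ (β.re - 1)) with hK
  have hK0 : 0 ≤ K := le_trans (by positivity) (le_max_left _ _)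
  set u : ℕ → ℝ := fun n =>
    K * (((n : ℝ) + ‖β‖ + 1) * (t+1) ^ n * ‖Complex.Gamma ((n : ℂ) + β + 1)‖⁻¹) with hu
  have husum : Summable u := (summable_master hβ' (by linarith)).mul_left K
  set g : ℕ → ℝ → ℂ := fun n x =>
    z ^ n * cpowR x ((n : ℂ) + β) / Complex.Gamma ((n : ℂ) + β + 1) with hgdef
  set g' : ℕ → ℝ → ℂ := fun n x =>
    z ^ n * (((n : ℂ) + β) * cpowR x ((n : ℂ) + β - 1)) / Complex.Gamma ((n : ℂ) + β + 1)
    with hg'def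
  have hopen : IsOpen (Ioo (t/2) (t+1)) := isOpen_Ioo
  have hconn : IsPreconnected (Ioo (t/2) (t+1)) := isPreconnected_Ioo
  have htmem : t ∈ Ioo (t/2) (t+1) := ⟨by linarith, by linarith⟩
  have hg : ∀ n (y : ℝ), y ∈ Ioo (t/2) (t+1) → HasDerivAt (g n) (g' n y) y := by
    intro n y hy
    have hy0 : 0 < y := lt_trans (by linarith) hy.1
    have := ((hasDerivAt_cpowR hy0 ((n : ℂ) + β)).const_mul (z ^ n)).div_const
      (Complex.Gamma ((n : ℂ) + β + 1))
    exact this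
  have hg' : ∀ n (y : ℝ), y ∈ Ioo (t/2) (t+1) → ‖g' n y‖ ≤ u n := by
    intro n y hy
    have hy0 : 0 < y := lt_trans (by linarith) hy.1
    rw [hg'def]
    simp only
    rw [norm_div, norm_mul, norm_mul, norm_pow, norm_cpowR hy0]
    have h1 : ‖z‖ ^ n ≤ 1 := pow_le_one₀ (norm_nonneg z) hz
    have h2 : ‖(n : ℂ) + β‖ ≤ (n : ℝ) + ‖β‖ + 1 := by
      calc ‖(n : ℂ) + β‖ ≤ ‖(n : ℂ)‖ + ‖β‖ := norm_add_le _ _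
        _ = (n : ℝ) + ‖β‖ := by rw [Complex.norm_natCast]
        _ ≤ (n : ℝ) + ‖β‖ + 1 := by linarith
    have h3 : y ^ (((n : ℂ) + β - 1).re) ≤ (t+1) ^ n * K := by
      have e : ((n : ℂ) + β - 1).re = (n : ℝ) + (β.re - 1) := by simp; ring
      rw [e, Real.rpow_add hy0, Real.rpow_natCast]
      have hyn : y ^ n ≤ (t+1) ^ n := pow_le_pow_left₀ hy0.le hy.2.le n
      have hyb : y ^ (β.re - 1) ≤ K := by
        rcases le_or_gt 0 (β.re - 1) with hb | hb
        · exact le_trans (Real.rpow_le_rpow hy0.le hy.2.le hb) (le_max_right _ _)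
        · exact le_trans (Real.rpow_le_rpow_of_nonpos (by linarith) hy.1.le hb.le)
            (le_max_left _ _)
      have hyb0 : (0:ℝ) ≤ y ^ (β.re - 1) := by positivity
      calc y ^ n * y ^ (β.re - 1) ≤ (t+1) ^ n * y ^ (β.re - 1) :=
            mul_le_mul_of_nonneg_right hyn hyb0
        _ ≤ (t+1) ^ n * K := mul_le_mul_of_nonneg_left hyb (by positivity)
    have hginv : (0:ℝ) ≤ ‖Complex.Gamma ((n : ℂ) + β + 1)‖⁻¹ := by positivity
    rw [div_eq_mul_inv]
    calc ‖z‖ ^ n * (‖(n : ℂ) + β‖ * y ^ (((n : ℂ) + β - 1).re)) *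
          ‖Complex.Gamma ((n : ℂ) + β + 1)‖⁻¹
        ≤ 1 * (((n : ℝ) + ‖β‖ + 1) * ((t+1) ^ n * K)) *
          ‖Complex.Gamma ((n : ℂ) + β + 1)‖⁻¹ := by
          apply mul_le_mul_of_nonneg_right _ hginv
          apply mul_le_mul h1 _ (by positivity) (by norm_num)
          exact mul_le_mul h2 h3 (by positivity) (by positivity)
      _ = u n := by rw [hu]; ring
  have hg0 : Summable fun n => g n t := summable_S hβ' hz ht
  have hder := hasDerivAt_tsum_of_isPreconnected husum hopen hconn hg hg' htmem hg0 htmem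
  have hrw : (∑' n, g' n t) = S z (β - 1) t := by
    rw [S]
    apply tsum_congr
    intro n
    rw [hg'def]
    simp only
    have hne : ((n : ℂ) + β) ≠ 0 := by
      intro h
      have : 0 < ((n : ℂ) + β).re := by
        simp only [Complex.add_re, Complex.natCast_re]
        have := Nat.cast_nonneg (α := ℝ) n
        linarith
      rw [h] at this; simp at this
    have hGrec : Complex.Gamma ((n : ℂ) + β + 1) = ((n : ℂ) + β) * Complex.Gamma ((n : ℂ) + β) :=
      Complex.Gamma_add_one _ hne
    have e1 : (n : ℂ) + β - 1 = (n : ℂ) + (β - 1) := by ring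
    have e2 : (n : ℂ) + (β - 1) + 1 = (n : ℂ) + β := by ring
    have hGne : Complex.Gamma ((n : ℂ) + β) ≠ 0 := by
      apply Gamma_ne_zero_of_re_pos
      simp only [Complex.add_re, Complex.natCast_re]
      have := Nat.cast_nonneg (α := ℝ) n
      linarith
    rw [hGrec, e1, e2, div_eq_div_iff (mul_ne_zero hne hGne) hGne]
    ring
  rw [hrw] at hder
  exact hder

lemma hasDerivAt_S' {β z : ℂ} (hβ : 0 < β.re) (hz : ‖z‖ ≤ 1) {t : ℝ} (ht : 0 < t) :
    HasDerivAt (S z β) (cpowR t (β - 1) / Complex.Gamma β + z * S z β t) t := by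
  have h := hasDerivAt_S hβ hz ht
  rwa [S_succ (by simpa using hβ) hz ht, sub_add_cancel] at h


/-- The kernel of the incomplete gamma-type integral. -/
noncomputable def ker (z β : ℂ) (x : ℝ) : ℂ := Complex.exp (-z * x) * cpowR x (β - 1)

noncomputable def Φ (z β : ℂ) (t : ℝ) : ℂ := ∫ x in (0:ℝ)..t, ker z β x

lemma continuousOn_ker (z β : ℂ) : ContinuousOn (ker z β) (Ioi 0) := by
  apply ContinuousOn.mul
  · apply Continuous.continuousOn
    exact (continuous_const.mul Complex.continuous_ofReal).cexp
  · exact continuousOn_cpowR (β - 1)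

lemma norm_ker {z β : ℂ} {x : ℝ} (hx : 0 < x) :
    ‖ker z β x‖ = Real.exp (-z.re * x) * x ^ (β.re - 1) := by
  rw [ker, norm_mul, norm_cpowR hx, Complex.norm_exp]
  have h1 : (-z * (x:ℂ)).re = -z.re * x := by simp [Complex.mul_re]
  have h2 : (β - 1).re = β.re - 1 := by simp
  rw [h1, h2]

lemma intervalIntegrable_ker {β : ℂ} (hβ : 0 < β.re) (z : ℂ) {T : ℝ} (hT : 0 ≤ T) :
    IntervalIntegrable (ker z β) volume 0 T := by
  rw [intervalIntegrable_iff_integrableOn_Ioc_of_le hT]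
  have hrp : IntegrableOn (fun x : ℝ => x ^ (β.re - 1)) (Ioc 0 T) := by
    have := (intervalIntegral.intervalIntegrable_rpow' (a := 0) (b := T) (r := β.re - 1) (by linarith))
    rwa [intervalIntegrable_iff_integrableOn_Ioc_of_le hT] at this
  have hbound : IntegrableOn (fun x : ℝ => Real.exp (‖z‖ * T) * x ^ (β.re - 1)) (Ioc 0 T) :=
    hrp.const_mul _
  apply hbound.integrable.mono
  · exact ((continuousOn_ker z β).mono Ioc_subset_Ioi_self).aestronglyMeasurable
      measurableSet_Ioc
  · filter_upwards [ae_restrict_mem measurableSet_Ioc] with x hx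
    rw [norm_ker hx.1]
    rw [Real.norm_of_nonneg (mul_nonneg (Real.exp_nonneg _) (Real.rpow_nonneg hx.1.le _))]
    apply mul_le_mul_of_nonneg_right _ (Real.rpow_nonneg hx.1.le _)
    apply Real.exp_le_exp.mpr
    have h1 : -z.re ≤ ‖z‖ := by
      have := Complex.abs_re_le_norm z
      cases' abs_le.mp this with h _
      linarith
    calc -z.re * x ≤ ‖z‖ * x := mul_le_mul_of_nonneg_right h1 hx.1.le
      _ ≤ ‖z‖ * T := mul_le_mul_of_nonneg_left hx.2 (norm_nonneg z)

lemma hasDerivAt_Φ {β : ℂ} (hβ : 0 < β.re) (z : ℂ) {t : ℝ} (ht : 0 < t) :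
    HasDerivAt (Φ z β) (ker z β t) t := by
  apply intervalIntegral.integral_hasDerivAt_right (intervalIntegrable_ker hβ z ht.le)
  · exact ⟨Ioi 0, Ioi_mem_nhds ht,
      ((continuousOn_ker z β).aestronglyMeasurable measurableSet_Ioi)⟩
  · exact (continuousOn_ker z β).continuousAt (Ioi_mem_nhds ht)

lemma norm_S_le {β z : ℂ} (hβ : 0 < β.re) (hz : ‖z‖ ≤ 1) {s : ℝ} (hs : 0 < s) (hs1 : s ≤ 1) :
    ‖S z β s‖ ≤ s ^ β.re *
      ∑' n : ℕ, ‖Complex.Gamma ((n : ℂ) + β + 1)‖⁻¹ := by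
  have hβ' : -1 < β.re := by linarith
  have hM : Summable (fun n : ℕ => ‖Complex.Gamma ((n : ℂ) + β + 1)‖⁻¹) := by
    have h1 := summable_norm_S (β := β) (z := 1) hβ' (by norm_num) (t := 1) one_pos
    apply Summable.of_nonneg_of_le (fun n => by positivity) _ h1
    intro n
    rw [norm_div, norm_mul, norm_pow, norm_cpowR one_pos]
    simp [Real.one_rpow]
  calc ‖S z β s‖ ≤ ∑' n : ℕ, ‖z ^ n * cpowR s ((n : ℂ) + β) / Complex.Gamma ((n : ℂ) + β + 1)‖ :=
        norm_tsum_le_tsum_norm (summable_norm_S hβ' hz hs)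
    _ ≤ ∑' n : ℕ, s ^ β.re * ‖Complex.Gamma ((n : ℂ) + β + 1)‖⁻¹ := by
        apply Summable.tsum_le_tsum _ (summable_norm_S hβ' hz hs) (hM.mul_left _)
        intro n
        rw [norm_div, norm_mul, norm_pow, norm_cpowR hs, div_eq_mul_inv]
        have h1 : ‖z‖ ^ n ≤ 1 := pow_le_one₀ (norm_nonneg z) hz
        have h2 : s ^ (((n : ℂ) + β).re) ≤ s ^ β.re := by
          rw [show ((n : ℂ) + β).re = (n : ℝ) + β.re by simp, Real.rpow_add hs,
            Real.rpow_natCast]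
          have : s ^ n ≤ 1 := pow_le_one₀ hs.le hs1
          nlinarith [Real.rpow_nonneg hs.le β.re]
        have hg : (0:ℝ) ≤ ‖Complex.Gamma ((n : ℂ) + β + 1)‖⁻¹ := by positivity
        calc ‖z‖ ^ n * s ^ (((n : ℂ) + β).re) * ‖Complex.Gamma ((n : ℂ) + β + 1)‖⁻¹
            ≤ 1 * s ^ β.re * ‖Complex.Gamma ((n : ℂ) + β + 1)‖⁻¹ := by
              apply mul_le_mul_of_nonneg_right _ hg
              exact mul_le_mul h1 h2 (by positivity) one_pos.le
          _ = s ^ β.re * ‖Complex.Gamma ((n : ℂ) + β + 1)‖⁻¹ := by ring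
    _ = s ^ β.re * ∑' n : ℕ, ‖Complex.Gamma ((n : ℂ) + β + 1)‖⁻¹ := tsum_mul_left

lemma norm_Φ_le {β : ℂ} (hβ : 0 < β.re) (z : ℂ) {t : ℝ} (ht : 0 < t) :
    ‖Φ z β t‖ ≤ Real.exp ((max (-z.re) 0) * t) * (t ^ β.re / β.re) := by
  set K := max (-z.re) 0 with hKdef
  have hK0 : 0 ≤ K := le_max_right _ _
  have hrpint : IntervalIntegrable (fun x : ℝ => Real.exp (K*t) * x ^ (β.re - 1)) volume 0 t :=
    (intervalIntegral.intervalIntegrable_rpow' (by linarith)).const_mul _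
  have h := intervalIntegral.norm_integral_le_abs_of_norm_le (μ := volume)
    (f := ker z β) (g := fun x => Real.exp (K*t) * x ^ (β.re - 1)) (a := 0) (b := t)
    ?_ hrpint
  · rw [Φ]
    refine h.trans ?_
    rw [intervalIntegral.integral_const_mul, integral_rpow (Or.inl (by linarith))]
    rw [sub_add_cancel, Real.zero_rpow hβ.ne', sub_zero]
    rw [_root_.abs_of_nonneg (mul_nonneg (Real.exp_nonneg _)
      (div_nonneg (Real.rpow_nonneg ht.le _) hβ.le))]
  · have huIoc : Set.uIoc (0:ℝ) t = Ioc 0 t := uIoc_of_le ht.le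
    rw [huIoc]
    filter_upwards [ae_restrict_mem measurableSet_Ioc] with x hx
    rw [norm_ker hx.1]
    apply mul_le_mul_of_nonneg_right _ (Real.rpow_nonneg hx.1.le _)
    apply Real.exp_le_exp.mpr
    calc -z.re * x ≤ K * x := mul_le_mul_of_nonneg_right (le_max_left _ _) hx.1.le
      _ ≤ K * t := mul_le_mul_of_nonneg_left hx.2 hK0

/-- The key closed-form identity. -/
lemma key_formula {β z : ℂ} (hβ : 0 < β.re) (hz : ‖z‖ ≤ 1) {t : ℝ} (ht : 0 < t) :
    Complex.exp (-z * t) * S z β t = (Complex.Gamma β)⁻¹ * Φ z β t := by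
  set D : ℝ → ℂ := fun x => Complex.exp (-z * x) * S z β x - (Complex.Gamma β)⁻¹ * Φ z β x
    with hDdef
  have hD : ∀ x : ℝ, 0 < x → HasDerivAt D 0 x := by
    intro x hx
    have h1 : HasDerivAt (fun y : ℝ => Complex.exp (-z * y)) (-z * Complex.exp (-z * x)) x := by
      have h0 : HasDerivAt (fun y : ℝ => ((y : ℂ))) 1 x := (hasDerivAt_id x).ofReal_comp
      have := (h0.const_mul (-z)).cexp
      simpa [mul_comm] using this
    have h2 := hasDerivAt_S' hβ hz hx
    have h3 := h1.mul h2
    have h4 := (hasDerivAt_Φ hβ z hx).const_mul ((Complex.Gamma β)⁻¹)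
    have h5 := h3.sub h4
    convert h5 using 1
    rfl
    rfl
    rw [ker]
    field_simp
    ring
  have hconst : ∀ s : ℝ, 0 < s → s ≤ t → D t = D s := by
    intro s hs hst
    have h := intervalIntegral.integral_eq_sub_of_hasDerivAt
      (f := D) (f' := fun _ => (0:ℂ)) (a := s) (b := t) ?_ intervalIntegrable_const
    · simp only [intervalIntegral.integral_zero] at h
      linear_combination -h
    · intro x hx
      rw [uIcc_of_le hst] at hx
      exact hD x (lt_of_lt_of_le hs hx.1)
  -- limit of D at 0+
  have hlim : Tendsto D (𝓝[>] (0:ℝ)) (𝓝 0) := by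
    have hT1 : Tendsto (fun s : ℝ => Complex.exp (-z * s) * S z β s) (𝓝[>] 0) (𝓝 0) := by
      apply squeeze_zero_norm' (a := fun s : ℝ =>
        (Real.exp ‖z‖ * ∑' n : ℕ, ‖Complex.Gamma ((n : ℂ) + β + 1)‖⁻¹) * s ^ β.re)
      · filter_upwards [Ioc_mem_nhdsGT one_pos] with s hs
        rw [norm_mul]
        have hns : ‖Complex.exp (-z * s)‖ ≤ Real.exp ‖z‖ := by
          rw [Complex.norm_exp]
          apply Real.exp_le_exp.mpr
          have : (-z * (s:ℂ)).re = -z.re * s := by simp [Complex.mul_re]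
          rw [this]
          have h1 : -z.re ≤ ‖z‖ := by
            have := Complex.abs_re_le_norm z
            cases' abs_le.mp this with h _
            linarith
          calc -z.re * s ≤ ‖z‖ * s := mul_le_mul_of_nonneg_right h1 hs.1.le
            _ ≤ ‖z‖ * 1 := mul_le_mul_of_nonneg_left hs.2 (norm_nonneg z)
            _ = ‖z‖ := mul_one _
        have hSb := norm_S_le hβ hz hs.1 hs.2
        calc ‖Complex.exp (-z * s)‖ * ‖S z β s‖
            ≤ Real.exp ‖z‖ * (s ^ β.re * ∑' n : ℕ, ‖Complex.Gamma ((n : ℂ) + β + 1)‖⁻¹) := by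
              apply mul_le_mul hns hSb (norm_nonneg _) (Real.exp_nonneg _)
          _ = (Real.exp ‖z‖ * ∑' n : ℕ, ‖Complex.Gamma ((n : ℂ) + β + 1)‖⁻¹) * s ^ β.re := by
              ring
      · have : Tendsto (fun s : ℝ => s ^ β.re) (𝓝[>] 0) (𝓝 0) := by
          have hc := (Real.continuousAt_rpow_const 0 β.re (Or.inr hβ.le)).continuousWithinAt
            (s := Ioi (0:ℝ))
          simpa [Real.zero_rpow hβ.ne'] using hc.tendsto
        simpa using (this.const_mul _)
    have hT2 : Tendsto (fun s : ℝ => (Complex.Gamma β)⁻¹ * Φ z β s) (𝓝[>] 0) (𝓝 0) := by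
      apply squeeze_zero_norm' (a := fun s : ℝ =>
        (‖(Complex.Gamma β)⁻¹‖ * Real.exp (max (-z.re) 0) / β.re) * s ^ β.re)
      · filter_upwards [Ioc_mem_nhdsGT one_pos] with s hs
        rw [norm_mul]
        have h := norm_Φ_le hβ z hs.1
        have hKs : Real.exp (max (-z.re) 0 * s) ≤ Real.exp (max (-z.re) 0) := by
          apply Real.exp_le_exp.mpr
          calc max (-z.re) 0 * s ≤ max (-z.re) 0 * 1 :=
              mul_le_mul_of_nonneg_left hs.2 (le_max_right _ _)
            _ = max (-z.re) 0 := mul_one _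
        calc ‖(Complex.Gamma β)⁻¹‖ * ‖Φ z β s‖
            ≤ ‖(Complex.Gamma β)⁻¹‖ * (Real.exp (max (-z.re) 0) * (s ^ β.re / β.re)) := by
              apply mul_le_mul_of_nonneg_left _ (norm_nonneg _)
              refine h.trans ?_
              apply mul_le_mul_of_nonneg_right hKs (div_nonneg (Real.rpow_nonneg hs.1.le _) hβ.le)
          _ = (‖(Complex.Gamma β)⁻¹‖ * Real.exp (max (-z.re) 0) / β.re) * s ^ β.re := by
              ring
      · have : Tendsto (fun s : ℝ => s ^ β.re) (𝓝[>] 0) (𝓝 0) := by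
          have hc := (Real.continuousAt_rpow_const 0 β.re (Or.inr hβ.le)).continuousWithinAt
            (s := Ioi (0:ℝ))
          simpa [Real.zero_rpow hβ.ne'] using hc.tendsto
        simpa using (this.const_mul _)
    have h := hT1.sub hT2
    rw [sub_zero] at h
    exact h
  have hDt : Tendsto D (𝓝[>] (0:ℝ)) (𝓝 (D t)) := by
    apply Tendsto.congr' _ tendsto_const_nhds
    filter_upwards [Ioo_mem_nhdsGT ht] with s hs
    exact (hconst s hs.1 hs.2.le)
  have := tendsto_nhds_unique hDt hlim
  rw [hDdef] at this
  simpa [sub_eq_zero] using this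


/-- The case `z = 1`. -/
lemma tendsto_S_one {β : ℂ} (hβ : 0 < β.re) :
    Tendsto (fun t : ℝ => Complex.exp (-(t:ℂ)) * S 1 β t) atTop (𝓝 1) := by
  have hker_eq : ∀ x ∈ Ioi (0:ℝ),
      ((Real.exp (-x) : ℝ) : ℂ) * (x:ℂ) ^ (β - 1) = ker 1 β x := by
    intro x hx
    rw [ker]
    congr 1
    · rw [Complex.ofReal_exp]
      congr 1
      push_cast
      ring
    · rw [Complex.cpow_def_of_ne_zero (by exact_mod_cast (ne_of_gt hx)),
        ← Complex.ofReal_log (le_of_lt hx), cpowR, mul_comm]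
  have hint : IntegrableOn (ker 1 β) (Ioi 0) volume :=
    (Complex.GammaIntegral_convergent hβ).congr_fun hker_eq measurableSet_Ioi
  have hΦ : Tendsto (Φ 1 β) atTop (𝓝 (Complex.Gamma β)) := by
    have h := intervalIntegral_tendsto_integral_Ioi 0 hint tendsto_id
    have he : ∫ x in Ioi (0:ℝ), ker 1 β x = Complex.Gamma β := by
      rw [Complex.Gamma_eq_integral hβ, Complex.GammaIntegral]
      exact (setIntegral_congr_fun measurableSet_Ioi hker_eq).symm
    rw [he] at h
    exact h
  have hmain : Tendsto (fun t : ℝ => (Complex.Gamma β)⁻¹ * Φ 1 β t) atTop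
      (𝓝 ((Complex.Gamma β)⁻¹ * Complex.Gamma β)) := hΦ.const_mul _
  rw [inv_mul_cancel₀ (Gamma_ne_zero_of_re_pos hβ)] at hmain
  apply hmain.congr'
  filter_upwards [eventually_gt_atTop (0:ℝ)] with t ht
  rw [← key_formula hβ (by norm_num) ht]
  congr 2
  push_cast
  ring

/-- The case `‖z‖ = 1`, `z ≠ 1`. -/
lemma tendsto_S_ne_one {β z : ℂ} (hβ : 0 < β.re) (hz : ‖z‖ = 1) (hz1 : z ≠ 1) :
    Tendsto (fun t : ℝ => Complex.exp (-(t:ℂ)) * S z β t) atTop (𝓝 0) := by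
  set c := z.re with hcdef
  have hc1 : c < 1 := by
    rcases lt_or_eq_of_le (show c ≤ 1 by
      have := Complex.abs_re_le_norm z
      rw [hz] at this
      cases' abs_le.mp this with _ h
      exact h) with h | h
    · exact h
    · exfalso
      apply hz1
      have hsq : z.re ^ 2 + z.im ^ 2 = 1 := by
        have h2 : ‖z‖ ^ 2 = z.re ^ 2 + z.im ^ 2 := by
          rw [Complex.sq_norm, Complex.normSq_apply]; ring
        rw [hz] at h2
        linarith [h2.symm]
      have him : z.im = 0 := by nlinarith [sq_nonneg z.im]
      apply Complex.ext
      · simp only [Complex.one_re]; rw [← hcdef]; exact h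
      · simp [him]
  have hc2 : -1 ≤ c := by
    have := Complex.abs_re_le_norm z
    rw [hz] at this
    cases' abs_le.mp this with h _
    linarith
  set ε := min (1 - c) 1 with hεdef
  have hε0 : 0 < ε := lt_min (by linarith) one_pos
  set K := max (-c) 0 with hKdef
  have hK0 : 0 ≤ K := le_max_right _ _
  have hexp : c - 1 + K ≤ -ε := by
    rcases le_or_gt 0 c with h | h
    · have hKe : K = 0 := max_eq_right (by linarith)
      have : ε ≤ 1 - c := min_le_left _ _
      rw [hKe]; linarith
    · have hKe : K = -c := max_eq_left (by linarith)
      have : ε ≤ 1 := min_le_right _ _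
      rw [hKe]; linarith
  -- bound
  apply squeeze_zero_norm' (a := fun t : ℝ =>
    (‖(Complex.Gamma β)⁻¹‖ / β.re) * (t ^ β.re * Real.exp (-ε * t)))
  · filter_upwards [eventually_gt_atTop (0:ℝ)] with t ht
    have hkf := key_formula hβ hz.le ht
    have hfact : Complex.exp (-(t:ℂ)) * S z β t
        = Complex.exp ((z - 1) * t) * ((Complex.Gamma β)⁻¹ * Φ z β t) := by
      rw [← hkf, ← mul_assoc, ← Complex.exp_add]
      congr 2
      ring
    rw [hfact, norm_mul, norm_mul]
    have hnexp : ‖Complex.exp ((z - 1) * t)‖ = Real.exp ((c - 1) * t) := by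
      rw [Complex.norm_exp]
      congr 1
      simp [Complex.mul_re, hcdef]
    -- bound Φ
    have hΦb : ‖Φ z β t‖ ≤ Real.exp (K * t) * (t ^ β.re / β.re) := by
      have hrpint : IntervalIntegrable (fun x : ℝ => Real.exp (K*t) * x ^ (β.re - 1))
          volume 0 t := (intervalIntegral.intervalIntegrable_rpow' (by linarith)).const_mul _
      have h := intervalIntegral.norm_integral_le_abs_of_norm_le (μ := volume)
        (f := ker z β) (g := fun x => Real.exp (K*t) * x ^ (β.re - 1)) (a := 0) (b := t)
        ?_ hrpint
      · rw [Φ]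
        refine h.trans ?_
        rw [intervalIntegral.integral_const_mul, integral_rpow (Or.inl (by linarith))]
        rw [sub_add_cancel, Real.zero_rpow hβ.ne', sub_zero]
        rw [_root_.abs_of_nonneg (mul_nonneg (Real.exp_nonneg _)
          (div_nonneg (Real.rpow_nonneg ht.le _) hβ.le))]
      · rw [uIoc_of_le ht.le]
        filter_upwards [ae_restrict_mem measurableSet_Ioc] with x hx
        rw [norm_ker hx.1]
        apply mul_le_mul_of_nonneg_right _ (Real.rpow_nonneg hx.1.le _)
        apply Real.exp_le_exp.mpr
        calc -z.re * x ≤ K * x := mul_le_mul_of_nonneg_right (le_max_left _ _) hx.1.le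
          _ ≤ K * t := mul_le_mul_of_nonneg_left hx.2 hK0
    calc ‖Complex.exp ((z - 1) * t)‖ * (‖(Complex.Gamma β)⁻¹‖ * ‖Φ z β t‖)
        ≤ Real.exp ((c-1)*t) * (‖(Complex.Gamma β)⁻¹‖ *
            (Real.exp (K * t) * (t ^ β.re / β.re))) := by
          rw [hnexp]
          apply mul_le_mul_of_nonneg_left _ (Real.exp_nonneg _)
          exact mul_le_mul_of_nonneg_left hΦb (norm_nonneg _)
      _ = (‖(Complex.Gamma β)⁻¹‖ / β.re) * (t ^ β.re * (Real.exp ((c-1)*t) * Real.exp (K*t)))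
          := by ring
      _ ≤ (‖(Complex.Gamma β)⁻¹‖ / β.re) * (t ^ β.re * Real.exp (-ε * t)) := by
          apply mul_le_mul_of_nonneg_left _ (by positivity)
          apply mul_le_mul_of_nonneg_left _ (Real.rpow_nonneg ht.le _)
          rw [← Real.exp_add]
          apply Real.exp_le_exp.mpr
          have : (c-1)*t + K*t = (c-1+K)*t := by ring
          rw [this]
          apply mul_le_mul_of_nonneg_right hexp ht.le
  · have h := tendsto_rpow_mul_exp_neg_mul_atTop_nhds_zero β.re ε hε0
    have h2 := h.const_mul (‖(Complex.Gamma β)⁻¹‖ / β.re)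
    rw [mul_zero] at h2
    exact h2


lemma main_pos (r : ℕ) (hr : 1 ≤ r) {β : ℂ} (hβ : 0 < β.re) :
    Tendsto (fun t : ℝ => Complex.exp (-(t:ℂ)) *
      ∑' m : ℕ, cpowR t ((r : ℂ) * m + β) / Complex.Gamma (1 + (r : ℂ) * m + β))
      atTop (𝓝 (1 / (r : ℂ))) := by
  have hβ' : -1 < β.re := by linarith
  have hr0 : r ≠ 0 := by omega
  set ζ : ℂ := Complex.exp (2 * π * Complex.I / r) with hζdef
  have hprim : IsPrimitiveRoot ζ r := Complex.isPrimitiveRoot_exp r hr0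
  have hζnorm : ‖ζ‖ = 1 := by
    rw [hζdef, show (2 * π * Complex.I / (r:ℂ)) = ((2 * π / r : ℝ) : ℂ) * Complex.I by
      push_cast; ring]
    exact Complex.norm_exp_ofReal_mul_I _
  have hrC : ((r:ℂ)) ≠ 0 := Nat.cast_ne_zero.mpr hr0
  have hstepA : ∀ t : ℝ, 0 < t →
      (∑' m : ℕ, cpowR t ((r : ℂ) * m + β) / Complex.Gamma (1 + (r : ℂ) * m + β))
        = (r:ℂ)⁻¹ * ∑ j ∈ Finset.range r, S (ζ^j) β t := by
    intro t ht
    set a : ℕ → ℂ := fun n => cpowR t ((n:ℂ) + β) / Complex.Gamma ((n:ℂ) + β + 1) with hadef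
    have hzsum : ∀ j : ℕ, Summable (fun n : ℕ => (ζ^j)^n * a n) := by
      intro j
      apply (summable_S (z := ζ^j) hβ' (by rw [norm_pow, hζnorm, one_pow]) ht).congr
      intro n
      simp only [hadef, mul_div_assoc]
    set f : ℕ → ℂ := fun n => if r ∣ n then a n else 0 with hfdef
    have h1 : (∑' m : ℕ, cpowR t ((r : ℂ) * m + β) / Complex.Gamma (1 + (r : ℂ) * m + β))
        = ∑' m : ℕ, f (r * m) := by
      apply tsum_congr; intro m
      have hd : r ∣ r * m := ⟨m, rfl⟩
      simp only [hfdef, hadef]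
      rw [if_pos hd]
      have e1 : ((r*m : ℕ) : ℂ) + β = (r:ℂ)*m + β := by push_cast; ring
      rw [e1, show ((r:ℂ)*m + β + 1) = 1 + (r:ℂ)*m + β from by ring]
    have hinj : Function.Injective (fun m : ℕ => r * m) := fun a b hab =>
      Nat.eq_of_mul_eq_mul_left (by omega) hab
    have h2 : ∑' m : ℕ, f (r * m) = ∑' n, f n := by
      apply hinj.tsum_eq
      intro n hn
      rw [Function.mem_support] at hn
      by_contra hmem
      apply hn
      simp only [hfdef]
      rw [if_neg]
      intro hdvd
      obtain ⟨m, rfl⟩ := hdvd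
      exact hmem ⟨m, rfl⟩
    have h3 : ∀ n : ℕ, f n = (r:ℂ)⁻¹ * ∑ j ∈ Finset.range r, (ζ^j)^n * a n := by
      intro n
      have hswap : ∀ j : ℕ, (ζ^j)^n = (ζ^n)^j := fun j => by
        rw [← pow_mul, mul_comm, pow_mul]
      have hgeom : ∑ j ∈ Finset.range r, (ζ^n)^j = if r ∣ n then (r:ℂ) else 0 := by
        by_cases hdvd : r ∣ n
        · rw [if_pos hdvd, (hprim.pow_eq_one_iff_dvd n).mpr hdvd]
          simp
        · rw [if_neg hdvd, geom_sum_eq (fun h => hdvd ((hprim.pow_eq_one_iff_dvd n).mp h)) r,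
            ← pow_mul, mul_comm n r, pow_mul, hprim.pow_eq_one, one_pow, sub_self, zero_div]
      simp only [hfdef]
      calc (if r ∣ n then a n else 0)
          = (r:ℂ)⁻¹ * ((if r ∣ n then (r:ℂ) else 0) * a n) := by
            by_cases hdvd : r ∣ n
            · rw [if_pos hdvd, if_pos hdvd, ← mul_assoc, inv_mul_cancel₀ hrC, one_mul]
            · rw [if_neg hdvd, if_neg hdvd, zero_mul, mul_zero]
        _ = (r:ℂ)⁻¹ * ∑ j ∈ Finset.range r, (ζ^j)^n * a n := by
            rw [← hgeom, Finset.sum_mul]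
            congr 1
            exact Finset.sum_congr rfl (fun j _ => by rw [hswap])
    have h4 : ∑' n, f n = (r:ℂ)⁻¹ * ∑ j ∈ Finset.range r, S (ζ^j) β t := by
      rw [tsum_congr h3, tsum_mul_left]
      congr 1
      rw [Summable.tsum_finsetSum (fun j _ => hzsum j)]
      apply Finset.sum_congr rfl
      intro j _
      rw [S]
      apply tsum_congr
      intro n
      simp only [hadef, mul_div_assoc]
    rw [h1, h2, h4]
  have hB : ∀ j ∈ Finset.range r, Tendsto (fun t : ℝ => Complex.exp (-(t:ℂ)) * S (ζ^j) β t)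
      atTop (𝓝 (if j = 0 then (1:ℂ) else 0)) := by
    intro j hj
    by_cases hj0 : j = 0
    · subst hj0
      rw [if_pos rfl]
      simpa [pow_zero] using tendsto_S_one hβ
    · rw [if_neg hj0]
      exact tendsto_S_ne_one hβ (by rw [norm_pow, hζnorm, one_pow])
        (hprim.pow_ne_one_of_pos_of_lt hj0 (Finset.mem_range.mp hj))
  have hsum := tendsto_finset_sum (Finset.range r) hB
  have hval : ∑ j ∈ Finset.range r, (if j = 0 then (1:ℂ) else 0) = 1 := by
    rw [Finset.sum_ite_eq' (Finset.range r) 0 (fun _ => (1:ℂ))]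
    rw [if_pos (Finset.mem_range.mpr (by omega))]
  rw [hval] at hsum
  have hmul := hsum.const_mul ((r:ℂ)⁻¹)
  rw [mul_one] at hmul
  have : (r:ℂ)⁻¹ = 1 / (r:ℂ) := (one_div _).symm
  rw [this] at hmul
  apply hmul.congr'
  filter_upwards [eventually_gt_atTop (0:ℝ)] with t ht
  rw [hstepA t ht, Finset.mul_sum, Finset.mul_sum, Finset.mul_sum]
  apply Finset.sum_congr rfl
  intro j _
  ring


end MLaux

open MLaux

theorem stmt6 (r : ℕ) (hr : 1 ≤ r) (β : ℂ) (hβ : -1 < β.re) :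
    Filter.Tendsto (fun t : ℝ =>
      Complex.exp (-(t : ℂ)) *
        ∑' m : ℕ, cpowR t ((r : ℂ) * m + β) / Complex.Gamma (1 + (r : ℂ) * m + β))
      Filter.atTop (nhds (1 / (r : ℂ))) := by
  have hr1 : (1:ℝ) ≤ (r:ℝ) := by exact_mod_cast hr
  have hβ' : 0 < (β + (r:ℂ)).re := by
    simp only [Complex.add_re, Complex.natCast_re]
    linarith
  have hmain := main_pos r hr hβ'
  have hzero : Tendsto (fun t : ℝ =>
      Complex.exp (-(t:ℂ)) * (cpowR t β / Complex.Gamma (1 + β))) atTop (𝓝 0) := by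
    apply squeeze_zero_norm' (a := fun t : ℝ =>
      ‖Complex.Gamma (1 + β)‖⁻¹ * (t ^ β.re * Real.exp (-1 * t)))
    · filter_upwards [eventually_gt_atTop (0:ℝ)] with t ht
      rw [norm_mul, norm_div, norm_cpowR ht]
      have he : ‖Complex.exp (-(t:ℂ))‖ = Real.exp (-1 * t) := by
        rw [Complex.norm_exp]
        congr 1
        simp
      rw [he, div_eq_mul_inv]
      apply le_of_eq
      ring
    · have h := (tendsto_rpow_mul_exp_neg_mul_atTop_nhds_zero β.re 1 one_pos).const_mul
        (‖Complex.Gamma (1 + β)‖⁻¹)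
      rw [mul_zero] at h
      exact h
  have hcombined := hzero.add hmain
  rw [zero_add] at hcombined
  apply hcombined.congr'
  filter_upwards [eventually_gt_atTop (0:ℝ)] with t ht
  -- identity: e*(c/Γ(1+β)) + e*T_{β+r} = e*T_β
  have hA : Summable (fun n : ℕ =>
      cpowR t ((n:ℂ) + β) / Complex.Gamma ((n:ℂ) + β + 1)) := by
    apply (summable_S (z := 1) hβ (by norm_num) ht).congr
    intro n
    rw [one_pow, one_mul]
  have hinj : Function.Injective (fun m : ℕ => r * m) := fun a b hab =>
    Nat.eq_of_mul_eq_mul_left (by omega) hab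
  have hg : Summable (fun m : ℕ =>
      cpowR t ((r:ℂ) * m + β) / Complex.Gamma (1 + (r:ℂ) * m + β)) := by
    apply (hA.comp_injective hinj).congr
    intro m
    simp only [Function.comp_apply]
    have e1 : ((r*m : ℕ) : ℂ) + β = (r:ℂ)*m + β := by push_cast; ring
    rw [e1, show ((r:ℂ)*m + β + 1) = 1 + (r:ℂ)*m + β from by ring]
  rw [Summable.tsum_eq_zero_add hg]
  have h0 : cpowR t ((r:ℂ) * (0:ℕ) + β) / Complex.Gamma (1 + (r:ℂ) * (0:ℕ) + β)
      = cpowR t β / Complex.Gamma (1 + β) := by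
    norm_num
  have htail : (∑' m : ℕ, cpowR t ((r:ℂ) * (m+1:ℕ) + β) /
        Complex.Gamma (1 + (r:ℂ) * (m+1:ℕ) + β))
      = ∑' m : ℕ, cpowR t ((r:ℂ) * m + (β + r)) / Complex.Gamma (1 + (r:ℂ) * m + (β + r)) := by
    apply tsum_congr
    intro m
    have e1 : (r:ℂ) * ((m+1:ℕ):ℂ) + β = (r:ℂ)*m + (β + r) := by push_cast; ring
    rw [e1]
    congr 2
    push_cast
    ring
  rw [h0, htail]
  ring
end

section
/- Let (a_m) be a complex sequence that is both (T, θ, A)-scaled aML and (T', θ', A')-scaled aML with respect to the same (r, β), with A ≠ 0 and A' ≠ 0. Then T' = T, and there exists an integer k such that θ' = θ + 2πk/r and A' = exp(−2πi·k·β/r)·A. -/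
/-- A complex sequence `a` is `(T, θ, A)`-scaled asymptotically Mittag-Leffler
with respect to `(r, β)` if
`a m * Γ(1 + r·m + β) / (T^(r·m+β) · exp(i·θ·(r·m+β))) → A` as `m → ∞`. -/
def IsAML (r : ℕ) (β : ℂ) (a : ℕ → ℂ) (T θ : ℝ) (A : ℂ) : Prop :=
  Filter.Tendsto
    (fun m : ℕ => a m * Complex.Gamma (1 + (r : ℂ) * m + β) /
      (cpowR T ((r : ℂ) * m + β) * Complex.exp (Complex.I * (θ : ℂ) * ((r : ℂ) * m + β))))
    Filter.atTop (nhds A)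

theorem stmt11 (r : ℕ) (hr : 1 ≤ r) (β : ℂ) (hβ : -1 < β.re)
    (T T' : ℝ) (hT : 0 < T) (hT' : 0 < T') (θ θ' : ℝ) (A A' : ℂ) (a : ℕ → ℂ)
    (haML : IsAML r β a T θ A) (haML' : IsAML r β a T' θ' A')
    (hA : A ≠ 0) (hA' : A' ≠ 0) :
    T' = T ∧ ∃ k : ℤ, θ' = θ + 2 * Real.pi * k / r ∧
      A' = Complex.exp (-(2 * Real.pi * Complex.I * k * β / r)) * A := by
  set s : ℂ := (Real.log T : ℂ) + Complex.I * θ with hs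
  set s' : ℂ := (Real.log T' : ℂ) + Complex.I * θ' with hs'
  have hden : ∀ (U φ : ℝ) (w : ℂ),
      cpowR U w * Complex.exp (Complex.I * (φ:ℂ) * w)
        = Complex.exp (w * ((Real.log U : ℂ) + Complex.I * φ)) := by
    intro U φ w
    rw [cpowR, ← Complex.exp_add]
    ring_nf
  have hfne : ∀ᶠ m in Filter.atTop,
      a m * Complex.Gamma (1 + (r:ℂ)*m + β) /
        (cpowR T ((r:ℂ)*m + β) * Complex.exp (Complex.I * (θ:ℂ) * ((r:ℂ)*m + β))) ≠ 0 :=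
    haML.eventually_ne hA
  have hkey : Filter.Tendsto (fun m : ℕ => Complex.exp (((r:ℂ)*m + β) * (s - s')))
      Filter.atTop (nhds (A'/A)) := by
    refine (haML'.div haML hA).congr' ?_
    filter_upwards [hfne] with m hm
    have hN : a m * Complex.Gamma (1 + (r:ℂ)*m + β) ≠ 0 := by
      intro h0; exact hm (by simp [h0])
    simp only [Pi.div_apply]
    rw [hden, hden, mul_sub, Complex.exp_sub]
    have ha0 := left_ne_zero_of_mul hN
    have hG0 := right_ne_zero_of_mul hN
    field_simp
    rw [hs, hs']
    ring
  -- shifted sequence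
  have hshift : Filter.Tendsto (fun m : ℕ => Complex.exp (((r:ℂ)*(m+1) + β) * (s - s')))
      Filter.atTop (nhds (A'/A)) := by
    have h := hkey.comp (Filter.tendsto_add_atTop_nat 1)
    refine h.congr fun m => ?_
    show Complex.exp (((r:ℂ)*((m:ℕ)+1 : ℕ) + β) * (s - s')) = _
    congr 2
    push_cast
    ring
  have hAA : A'/A ≠ 0 := div_ne_zero hA' hA
  have hone : Complex.exp ((r:ℂ) * (s - s')) = 1 := by
    have hdiv := hshift.div hkey hAA
    rw [div_self hAA] at hdiv
    have hdiv' : Filter.Tendsto (fun _ : ℕ => Complex.exp ((r:ℂ) * (s - s')))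
        Filter.atTop (nhds 1) := by
      refine hdiv.congr fun m => ?_
      show Complex.exp (((r:ℂ)*(m+1) + β) * (s - s')) /
        Complex.exp (((r:ℂ)*m + β) * (s - s')) = _
      rw [← Complex.exp_sub]
      congr 1
      ring
    exact tendsto_nhds_unique tendsto_const_nhds hdiv'
  obtain ⟨n, hn⟩ := Complex.exp_eq_one_iff.mp hone
  have hrne : (r:ℝ) ≠ 0 := Nat.cast_ne_zero.mpr (by omega)
  have hre : (r:ℝ) * (Real.log T - Real.log T') = 0 := by
    have := congrArg Complex.re hn
    simpa [hs, hs', Complex.mul_re, Complex.mul_im] using this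
  have him : (r:ℝ) * (θ - θ') = n * (2 * Real.pi) := by
    have := congrArg Complex.im hn
    simpa [hs, hs', Complex.mul_re, Complex.mul_im] using this
  have hlog : Real.log T = Real.log T' := by
    have := mul_eq_zero.mp hre
    rcases this with h | h
    · exact absurd h hrne
    · linarith
  have hTT : T' = T := by
    rw [← Real.exp_log hT', ← Real.exp_log hT, hlog]
  refine ⟨hTT, -n, ?_, ?_⟩
  · push_cast
    field_simp
    linarith [him]
  · -- A' = exp(β(s-s')) * A, and s - s' = n*(2π I)/r
    have hc : s - s' = (n:ℂ) * (2 * Real.pi * Complex.I) / r := by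
      have hrC : (r:ℂ) ≠ 0 := Nat.cast_ne_zero.mpr (by omega)
      field_simp
      linear_combination hn
    have hconst : ∀ m : ℕ, Complex.exp (((r:ℂ)*m + β) * (s - s')) =
        Complex.exp (β * (s - s')) := by
      intro m
      rw [add_mul, Complex.exp_add]
      have : (r:ℂ) * m * (s - s') = ((m * n : ℤ) : ℂ) * (2 * Real.pi * Complex.I) := by
        rw [hc]
        have hrC : (r:ℂ) ≠ 0 := Nat.cast_ne_zero.mpr (by omega)
        field_simp
        push_cast
        ring
      rw [this, Complex.exp_int_mul_two_pi_mul_I, one_mul]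
    have hlim : Complex.exp (β * (s - s')) = A' / A := by
      refine tendsto_nhds_unique ?_ hkey
      simp only [hconst]
      exact tendsto_const_nhds
    have : A' = Complex.exp (β * (s - s')) * A := by
      rw [hlim]; field_simp
    rw [this, hc]
    congr 1
    push_cast
    have hrC : (r:ℂ) ≠ 0 := Nat.cast_ne_zero.mpr (by omega)
    field_simp
end

section
/- Let (a_m) be a complex sequence that is (T, θ, A)-scaled aML with respect to (r, β), with A ≠ 0. Then for every T' > 0, θ' ∈ ℝ and A' ∈ ℂ with A' ≠ 0, the sequence (a_m) is NOT (T', θ', A')-scaled aML with respect to (r, β + 1). (This expresses that multiplying the series ∑_m a_m t^(rm+β) by t destroys the asymptotically Mittag-Leffler property for every nontrivial scaling.) -/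
lemma norm_denomAML (T θ : ℝ) (w : ℂ) :
    ‖cpowR T w * Complex.exp (Complex.I * (θ : ℂ) * w)‖
      = Real.exp (w.re * Real.log T - θ * w.im) := by
  rw [norm_mul, cpowR,
    Complex.norm_exp, Complex.norm_exp, ← Real.exp_add]
  congr 1
  simp [Complex.mul_re, Complex.mul_im, Complex.I_re, Complex.I_im]
  ring

theorem stmt14 (r : ℕ) (hr : 1 ≤ r) (β : ℂ) (hβ : -1 < β.re)
    (T : ℝ) (hT : 0 < T) (θ : ℝ) (A : ℂ) (a : ℕ → ℂ)
    (haML : IsAML r β a T θ A) (hA : A ≠ 0) :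
    ∀ T' : ℝ, 0 < T' → ∀ θ' : ℝ, ∀ A' : ℂ, A' ≠ 0 →
      ¬ IsAML r (β + 1) a T' θ' A' := by
  intro T' hT' θ' A' hA' h'
  -- basic facts
  have hwre : ∀ m : ℕ, (1 + (r : ℂ) * m + β).re = 1 + r * m + β.re := by
    intro m; simp [Complex.add_re, Complex.mul_re]
  have hwpos : ∀ m : ℕ, 0 < (1 + (r : ℂ) * m + β).re := by
    intro m
    rw [hwre]
    have h1 : (0:ℝ) ≤ (r:ℝ) * m := by positivity
    linarith
  -- the norms of the two sequences
  have hu : Filter.Tendsto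
      (fun m : ℕ => ‖a m * Complex.Gamma (1 + (r : ℂ) * m + β) /
        (cpowR T ((r : ℂ) * m + β) * Complex.exp (Complex.I * (θ : ℂ) * ((r : ℂ) * m + β)))‖)
      Filter.atTop (nhds ‖A‖) := haML.norm
  have hv : Filter.Tendsto
      (fun m : ℕ => ‖a m * Complex.Gamma (1 + (r : ℂ) * m + (β + 1)) /
        (cpowR T' ((r : ℂ) * m + (β + 1)) *
          Complex.exp (Complex.I * (θ' : ℂ) * ((r : ℂ) * m + (β + 1))))‖)
      Filter.atTop (nhds ‖A'‖) := h'.norm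
  -- rewrite norms explicitly
  set φ : ℕ → ℝ := fun m => ‖a m * Complex.Gamma (1 + (r : ℂ) * m + β)‖ with hφ
  have him : ∀ m : ℕ, ((r : ℂ) * m + β).im = β.im := by
    intro m; simp [Complex.add_im, Complex.mul_im]
  have hre : ∀ m : ℕ, ((r : ℂ) * m + β).re = r * m + β.re := by
    intro m; simp [Complex.add_re, Complex.mul_re]
  have hfu : ∀ m : ℕ,
      ‖a m * Complex.Gamma (1 + (r : ℂ) * m + β) /
        (cpowR T ((r : ℂ) * m + β) * Complex.exp (Complex.I * (θ : ℂ) * ((r : ℂ) * m + β)))‖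
      = φ m / Real.exp ((r * m + β.re) * Real.log T - θ * β.im) := by
    intro m
    rw [norm_div, norm_denomAML, him, hre]
  have hgv : ∀ m : ℕ,
      ‖a m * Complex.Gamma (1 + (r : ℂ) * m + (β + 1)) /
        (cpowR T' ((r : ℂ) * m + (β + 1)) *
          Complex.exp (Complex.I * (θ' : ℂ) * ((r : ℂ) * m + (β + 1))))‖
      = ‖(1 : ℂ) + (r : ℂ) * m + β‖ * φ m /
          Real.exp ((r * m + β.re + 1) * Real.log T' - θ' * β.im) := by
    intro m
    have hne : (1 : ℂ) + (r : ℂ) * m + β ≠ 0 := by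
      intro h
      have := hwpos m
      rw [h] at this
      simp at this
    have hΓ : Complex.Gamma (1 + (r : ℂ) * m + (β + 1))
        = (1 + (r : ℂ) * m + β) * Complex.Gamma (1 + (r : ℂ) * m + β) := by
      have : (1 : ℂ) + (r : ℂ) * m + (β + 1) = (1 + (r : ℂ) * m + β) + 1 := by ring
      rw [this, Complex.Gamma_add_one _ hne]
    rw [norm_div, norm_denomAML, hΓ]
    have h1 : ((r : ℂ) * m + (β + 1)).im = β.im := by
      simp [Complex.add_im, Complex.mul_im]
    have h2 : ((r : ℂ) * m + (β + 1)).re = r * m + β.re + 1 := by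
      simp [Complex.add_re, Complex.mul_re]; ring
    rw [h1, h2]
    rw [mul_comm (a m), mul_assoc, norm_mul, hφ]
    ring_nf
  rw [show (fun m : ℕ => ‖a m * Complex.Gamma (1 + (r : ℂ) * m + β) /
        (cpowR T ((r : ℂ) * m + β) * Complex.exp (Complex.I * (θ : ℂ) * ((r : ℂ) * m + β)))‖)
      = fun m : ℕ => φ m / Real.exp ((r * m + β.re) * Real.log T - θ * β.im)
      from funext hfu] at hu
  rw [show (fun m : ℕ => ‖a m * Complex.Gamma (1 + (r : ℂ) * m + (β + 1)) /
        (cpowR T' ((r : ℂ) * m + (β + 1)) *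
          Complex.exp (Complex.I * (θ' : ℂ) * ((r : ℂ) * m + (β + 1))))‖)
      = fun m : ℕ => ‖(1 : ℂ) + (r : ℂ) * m + β‖ * φ m /
          Real.exp ((r * m + β.re + 1) * Real.log T' - θ' * β.im)
      from funext hgv] at hv
  -- h m : the ratio
  set u : ℕ → ℝ := fun m : ℕ => φ m / Real.exp ((r * m + β.re) * Real.log T - θ * β.im) with hud
  set hfun : ℕ → ℝ := fun m => ‖(1 : ℂ) + (r : ℂ) * m + β‖ *
      Real.exp ((r * m + β.re) * Real.log T - θ * β.im) /
      Real.exp ((r * m + β.re + 1) * Real.log T' - θ' * β.im) with hhd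
  have huv : ∀ m : ℕ, ‖(1 : ℂ) + (r : ℂ) * m + β‖ * φ m /
      Real.exp ((r * m + β.re + 1) * Real.log T' - θ' * β.im) = u m * hfun m := by
    intro m
    rw [hud, hhd]
    have e1 : Real.exp ((r * m + β.re) * Real.log T - θ * β.im) ≠ 0 := (Real.exp_pos _).ne'
    field_simp
  rw [show (fun m : ℕ => ‖(1 : ℂ) + (r : ℂ) * m + β‖ * φ m /
      Real.exp ((r * m + β.re + 1) * Real.log T' - θ' * β.im)) = fun m : ℕ => u m * hfun m
      from funext huv] at hv
  -- u is eventually nonzero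
  have hAn : ‖A‖ ≠ 0 := norm_ne_zero_iff.mpr hA
  have hune : ∀ᶠ m in Filter.atTop, u m ≠ 0 := hu.eventually_ne hAn
  -- hfun tends to ‖A'‖ / ‖A‖
  have hh : Filter.Tendsto hfun Filter.atTop (nhds (‖A'‖ / ‖A‖)) := by
    have := hv.div hu hAn
    refine this.congr' ?_
    filter_upwards [hune] with m hm
    simp only [Pi.div_apply]
    field_simp
  have hLpos : 0 < ‖A'‖ / ‖A‖ := by
    have : 0 < ‖A‖ := lt_of_le_of_ne (norm_nonneg _) (Ne.symm hAn)
    have h2 : 0 < ‖A'‖ := norm_pos_iff.mpr hA'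
    positivity
  -- rewrite hfun as C * ‖1 + r m + β‖ * x ^ (r * m)
  set x : ℝ := Real.exp (Real.log T - Real.log T') with hxd
  set C : ℝ := Real.exp (β.re * Real.log T - θ * β.im -
      ((β.re + 1) * Real.log T' - θ' * β.im)) with hCd
  have hCpos : 0 < C := Real.exp_pos _
  have hxpos : 0 < x := Real.exp_pos _
  have hform : ∀ m : ℕ, hfun m = C * (‖(1 : ℂ) + (r : ℂ) * m + β‖ * x ^ (r * m)) := by
    intro m
    simp only [hhd, hxd, hCd]
    rw [← Real.exp_nat_mul, mul_left_comm, ← Real.exp_add, mul_div_assoc, ← Real.exp_sub]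
    congr 1
    push_cast
    ring
  -- ‖1 + r m + β‖ → ∞
  have hnorm_atTop : Filter.Tendsto (fun m : ℕ => ‖(1 : ℂ) + (r : ℂ) * m + β‖)
      Filter.atTop Filter.atTop := by
    have h1 : Filter.Tendsto (fun m : ℕ => (r : ℝ) * m) Filter.atTop Filter.atTop := by
      apply Filter.Tendsto.const_mul_atTop
        (by exact_mod_cast Nat.lt_of_lt_of_le zero_lt_one hr)
      exact tendsto_natCast_atTop_atTop
    have h2 := Filter.tendsto_atTop_add_const_right Filter.atTop β.re h1
    have h3 := Filter.tendsto_atTop_add_const_left Filter.atTop 1 h2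
    have h4 : Filter.Tendsto (fun m : ℕ => 1 + (r : ℝ) * m + β.re)
        Filter.atTop Filter.atTop := by simpa [add_assoc] using h3
    refine Filter.tendsto_atTop_mono (fun m => ?_) h4
    rw [← hwre m]
    exact Complex.re_le_norm _
  -- x ^ (r*m) → 0, hence x < 1
  have hx0 : Filter.Tendsto (fun m : ℕ => C * x ^ (r * m)) Filter.atTop (nhds 0) := by
    have h1 := hh.div_atTop hnorm_atTop
    refine h1.congr' ?_
    filter_upwards [hnorm_atTop.eventually_ge_atTop 1] with m hm
    have hne : ‖(1 : ℂ) + (r : ℂ) * m + β‖ ≠ 0 := by linarith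
    rw [hform m, mul_comm (‖(1 : ℂ) + (r : ℂ) * m + β‖) (x ^ (r * m)), ← mul_assoc,
      mul_div_assoc, div_self hne, mul_one]
  have hxlt : x < 1 := by
    by_contra hc
    push_neg at hc
    have hge : ∀ m : ℕ, C ≤ C * x ^ (r * m) := by
      intro m
      nth_rewrite 1 [← mul_one C]
      have h1 : (1:ℝ) ≤ x ^ (r * m) := by
        calc (1:ℝ) = 1 ^ (r * m) := (one_pow _).symm
        _ ≤ x ^ (r * m) := pow_le_pow_left₀ zero_le_one hc _
      exact mul_le_mul_of_nonneg_left h1 hCpos.le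
    have := hx0.eventually (eventually_lt_nhds hCpos)
    rcases this.exists with ⟨m, hm⟩
    exact absurd (hge m) (not_le.mpr hm)
  -- conclude hfun → 0
  have hbound : Filter.Tendsto (fun m : ℕ => C * ((1 + ‖β‖ + r * m) * (x ^ r) ^ m))
      Filter.atTop (nhds 0) := by
    have hy0 : 0 ≤ x ^ r := by positivity
    have hy1 : x ^ r < 1 := pow_lt_one₀ hxpos.le hxlt (by omega)
    have h1 : Filter.Tendsto (fun m : ℕ => (1 + ‖β‖) * (x ^ r) ^ m) Filter.atTop (nhds 0) := by
      simpa using (tendsto_pow_atTop_nhds_zero_of_lt_one hy0 hy1).const_mul (1 + ‖β‖)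
    have h2 : Filter.Tendsto (fun m : ℕ => (r : ℝ) * ((m : ℝ) * (x ^ r) ^ m))
        Filter.atTop (nhds 0) := by
      simpa using (tendsto_self_mul_const_pow_of_lt_one hy0 hy1).const_mul (r : ℝ)
    have h3 := (h1.add h2).const_mul C
    simp only [mul_zero, add_zero] at h3
    refine h3.congr fun m => ?_
    ring
  have hfun0 : Filter.Tendsto hfun Filter.atTop (nhds 0) := by
    apply squeeze_zero (fun m => ?_) (fun m => ?_) hbound
    · rw [hform m]; positivity
    · rw [hform m, pow_mul]
      apply mul_le_mul_of_nonneg_left ?_ hCpos.le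
      apply mul_le_mul_of_nonneg_right ?_ (by positivity)
      calc ‖(1 : ℂ) + (r : ℂ) * m + β‖ ≤ ‖(1 : ℂ) + (r : ℂ) * m‖ + ‖β‖ := norm_add_le _ _
        _ ≤ ‖(1 : ℂ)‖ + ‖(r : ℂ) * m‖ + ‖β‖ := by linarith [norm_add_le (1 : ℂ) ((r : ℂ) * m)]
        _ = 1 + ‖β‖ + r * m := by
            rw [norm_one, norm_mul, Complex.norm_natCast, Complex.norm_natCast]; ring
  exact absurd (tendsto_nhds_unique hh hfun0) (ne_of_gt hLpos)
end

section
/- Let r_X, r_Y ≥ 1 be integers and r := gcd(r_X, r_Y). Then for all s_X, s_Y ∈ ℂ and every m ∈ ℕ, ∑ s_X^{r_X·m_X}·s_Y^{r_Y·m_Y}/((r_X·m_X)!·(r_Y·m_Y)!) = (1/(r_X·r_Y))·∑_{k=0}^{r_X−1} ∑_{ℓ=0}^{r_Y−1} (exp(2πik/r_X)·s_X + exp(2πiℓ/r_Y)·s_Y)^{r·m}/(r·m)!, where the left-hand sum ranges over all pairs (m_X, m_Y) ∈ ℕ² with r_X·m_X + r_Y·m_Y = r·m. -/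
lemma rootsum (r : ℕ) (hr : 1 ≤ r) (j : ℕ) :
    ∑ k ∈ Finset.range r, Complex.exp (2 * Real.pi * Complex.I * k / r) ^ j
      = if r ∣ j then (r : ℂ) else 0 := by
  have hr0 : (r : ℂ) ≠ 0 := Nat.cast_ne_zero.mpr (by omega)
  have h2pi : (2 * (Real.pi : ℂ) * Complex.I) ≠ 0 := by
    simp [Real.pi_ne_zero, Complex.I_ne_zero, Complex.ofReal_ne_zero]
  have h1 : ∀ k : ℕ, Complex.exp (2 * Real.pi * Complex.I * k / r) ^ j
      = (Complex.exp (2 * Real.pi * Complex.I * j / r)) ^ k := by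
    intro k
    rw [← Complex.exp_nat_mul, ← Complex.exp_nat_mul]
    congr 1
    ring
  simp only [h1]
  by_cases hd : r ∣ j
  · obtain ⟨c, rfl⟩ := hd
    have h2 : Complex.exp (2 * Real.pi * Complex.I * ((r * c : ℕ) : ℂ) / r) = 1 := by
      rw [Complex.exp_eq_one_iff]
      refine ⟨c, ?_⟩
      push_cast
      field_simp
    rw [show ((r * c : ℕ) : ℂ) = (r : ℂ) * (c : ℂ) by push_cast; ring] at h2
    simp [h2]
  · have hpow : Complex.exp (2 * Real.pi * Complex.I * j / r) ^ r = 1 := by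
      rw [← Complex.exp_nat_mul, Complex.exp_eq_one_iff]
      refine ⟨j, ?_⟩
      field_simp
      norm_cast
    have hne : Complex.exp (2 * Real.pi * Complex.I * j / r) ≠ 1 := by
      intro h
      rw [Complex.exp_eq_one_iff] at h
      obtain ⟨n, hn⟩ := h
      apply hd
      rw [div_eq_iff hr0] at hn
      have key : (2 * (Real.pi : ℂ) * Complex.I) * ((j : ℂ) - n * r) = 0 := by
        linear_combination hn
      have hj : (j : ℂ) = n * r :=
        sub_eq_zero.mp ((mul_eq_zero.mp key).resolve_left h2pi)
      have hj2 : (j : ℤ) = n * r := by exact_mod_cast hj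
      exact Int.natCast_dvd_natCast.mp ⟨n, by rw [hj2, mul_comm]⟩
    rw [geom_sum_eq hne, hpow]
    simp [hd]


theorem stmt18 (rX rY : ℕ) (hrX : 1 ≤ rX) (hrY : 1 ≤ rY) (sX sY : ℂ) (m : ℕ) :
    ∑ p ∈ (Finset.range (Nat.gcd rX rY * m + 1) ×ˢ
        Finset.range (Nat.gcd rX rY * m + 1)).filter
        (fun p : ℕ × ℕ => rX * p.1 + rY * p.2 = Nat.gcd rX rY * m),
      sX ^ (rX * p.1) * sY ^ (rY * p.2) /
        (((rX * p.1).factorial : ℂ) * ((rY * p.2).factorial : ℂ))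
    = (1 / ((rX : ℂ) * (rY : ℂ))) *
        ∑ k ∈ Finset.range rX, ∑ l ∈ Finset.range rY,
          (Complex.exp (2 * Real.pi * Complex.I * k / rX) * sX +
              Complex.exp (2 * Real.pi * Complex.I * l / rY) * sY) ^ (Nat.gcd rX rY * m) /
            ((Nat.gcd rX rY * m).factorial : ℂ) := by
  set N := Nat.gcd rX rY * m with hN
  have hrX0 : (rX : ℂ) ≠ 0 := Nat.cast_ne_zero.mpr (by omega)
  have hrY0 : (rY : ℂ) ≠ 0 := Nat.cast_ne_zero.mpr (by omega)
  set c : ℕ → ℂ := fun j => sX ^ j * sY ^ (N - j) /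
      ((j.factorial : ℂ) * ((N - j).factorial : ℂ)) with hc
  have expand : ∀ a b : ℂ, (a * sX + b * sY) ^ N / (N.factorial : ℂ)
      = ∑ j ∈ Finset.range (N + 1), a ^ j * b ^ (N - j) * c j := by
    intro a b
    rw [add_pow, Finset.sum_div]
    refine Finset.sum_congr rfl fun j hj => ?_
    have hjN : j ≤ N := Nat.lt_succ_iff.mp (Finset.mem_range.mp hj)
    rw [Nat.cast_choose ℂ hjN, hc]
    have h1 : ((j.factorial : ℂ)) ≠ 0 := Nat.cast_ne_zero.mpr j.factorial_ne_zero
    have h2 : (((N - j).factorial : ℂ)) ≠ 0 := Nat.cast_ne_zero.mpr (N - j).factorial_ne_zero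
    have h3 : ((N.factorial : ℂ)) ≠ 0 := Nat.cast_ne_zero.mpr N.factorial_ne_zero
    field_simp
    ring
  have rhs : ∑ k ∈ Finset.range rX, ∑ l ∈ Finset.range rY,
        (Complex.exp (2 * Real.pi * Complex.I * k / rX) * sX +
            Complex.exp (2 * Real.pi * Complex.I * l / rY) * sY) ^ N / (N.factorial : ℂ)
      = ∑ j ∈ Finset.range (N + 1),
          (if rX ∣ j then (rX : ℂ) else 0) * (if rY ∣ (N - j) then (rY : ℂ) else 0) * c j := by
    have hswap : ∀ (f : ℕ → ℕ → ℕ → ℂ),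
        ∑ k ∈ Finset.range rX, ∑ l ∈ Finset.range rY, ∑ j ∈ Finset.range (N + 1), f k l j
        = ∑ j ∈ Finset.range (N + 1), ∑ k ∈ Finset.range rX, ∑ l ∈ Finset.range rY,
            f k l j := by
      intro f
      rw [show (∑ k ∈ Finset.range rX, ∑ l ∈ Finset.range rY,
            ∑ j ∈ Finset.range (N + 1), f k l j)
          = ∑ k ∈ Finset.range rX, ∑ j ∈ Finset.range (N + 1), ∑ l ∈ Finset.range rY, f k l j
          from Finset.sum_congr rfl fun k _ => Finset.sum_comm, Finset.sum_comm]
    simp only [expand]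
    rw [hswap]
    refine Finset.sum_congr rfl fun j _ => ?_
    rw [← rootsum rX hrX j, ← rootsum rY hrY (N - j)]
    rw [Finset.sum_mul_sum]
    rw [Finset.sum_mul]
    refine Finset.sum_congr rfl fun k _ => ?_
    rw [Finset.sum_mul]
  rw [rhs, Finset.mul_sum]
  have step : ∀ j ∈ Finset.range (N + 1),
      1 / ((rX : ℂ) * rY) *
        ((if rX ∣ j then (rX : ℂ) else 0) * (if rY ∣ (N - j) then (rY : ℂ) else 0) * c j)
      = if rX ∣ j ∧ rY ∣ (N - j) then c j else 0 := by
    intro j _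
    split_ifs with h1 h2 h3 h4 h5 <;>
      first
      | (exfalso; tauto)
      | simp
    · field_simp
  rw [Finset.sum_congr rfl step, ← Finset.sum_filter]
  refine Finset.sum_nbij' (fun p : ℕ × ℕ => rX * p.1)
    (fun j => (j / rX, (N - j) / rY)) ?_ ?_ ?_ ?_ ?_
  · rintro ⟨mx, my⟩ hp
    simp only [Finset.mem_filter, Finset.mem_product, Finset.mem_range] at hp ⊢
    obtain ⟨_, heq⟩ := hp
    constructor
    · omega
    · constructor
      · exact ⟨mx, rfl⟩
      · exact ⟨my, by omega⟩
  · intro j hj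
    simp only [Finset.mem_filter, Finset.mem_product, Finset.mem_range] at hj ⊢
    obtain ⟨hjN, hdx, hdy⟩ := hj
    obtain ⟨a, rfl⟩ := hdx
    obtain ⟨b, hb⟩ := hdy
    rw [Nat.mul_div_cancel_left a (by omega : 0 < rX), hb,
      Nat.mul_div_cancel_left b (by omega : 0 < rY)]
    refine ⟨⟨?_, ?_⟩, by omega⟩
    · have : a ≤ rX * a := Nat.le_mul_of_pos_left a (by omega)
      omega
    · have : b ≤ rY * b := Nat.le_mul_of_pos_left b (by omega)
      omega
  · rintro ⟨mx, my⟩ hp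
    simp only [Finset.mem_filter, Finset.mem_product, Finset.mem_range] at hp
    obtain ⟨_, heq⟩ := hp
    have h1 : rX * mx / rX = mx := Nat.mul_div_cancel_left mx (by omega)
    have h2 : N - rX * mx = rY * my := by omega
    have h3 : rY * my / rY = my := Nat.mul_div_cancel_left my (by omega)
    simp [h1, h2, h3]
  · intro j hj
    simp only [Finset.mem_filter, Finset.mem_range] at hj
    obtain ⟨hjN, hdx, _⟩ := hj
    exact Nat.mul_div_cancel' hdx
  · rintro ⟨mx, my⟩ hp
    simp only [Finset.mem_filter, Finset.mem_product, Finset.mem_range] at hp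
    obtain ⟨_, heq⟩ := hp
    have h2 : N - rX * mx = rY * my := by omega
    simp [hc, h2]
end

section
/- Let r_X, r_Y ≥ 1 be integers, let k, ℓ be integers with 0 ≤ k < r_X and 0 ≤ ℓ < r_Y such that exp(2πik/r_X) ≠ exp(2πiℓ/r_Y), and let S_X, S_Y > 0 be real numbers with S_X + S_Y = 1. Then for all (a, b) ∈ [0, S_X] × [0, S_Y], |exp(2πik/r_X)·a + exp(2πiℓ/r_Y)·b| ≤ max(S_X, S_Y, |exp(2πik/r_X)·S_X + exp(2πiℓ/r_Y)·S_Y|), and this maximum is strictly less than 1. -/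
set_option maxHeartbeats 1000000


theorem stmt19 (rX rY : ℕ) (hrX : 1 ≤ rX) (hrY : 1 ≤ rY)
    (k l : ℕ) (hk : k < rX) (hl : l < rY)
    (hne : Complex.exp (2 * Real.pi * Complex.I * k / rX) ≠
      Complex.exp (2 * Real.pi * Complex.I * l / rY))
    (SX SY : ℝ) (hSX : 0 < SX) (hSY : 0 < SY) (hsum : SX + SY = 1) :
    (∀ a b : ℝ, a ∈ Set.Icc (0 : ℝ) SX → b ∈ Set.Icc (0 : ℝ) SY →
      norm (Complex.exp (2 * Real.pi * Complex.I * k / rX) * a +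
          Complex.exp (2 * Real.pi * Complex.I * l / rY) * b) ≤
        max (max SX SY)
          (norm (Complex.exp (2 * Real.pi * Complex.I * k / rX) * SX +
            Complex.exp (2 * Real.pi * Complex.I * l / rY) * SY))) ∧
    max (max SX SY)
      (norm (Complex.exp (2 * Real.pi * Complex.I * k / rX) * SX +
        Complex.exp (2 * Real.pi * Complex.I * l / rY) * SY)) < 1 := by
  set u := Complex.exp (2 * Real.pi * Complex.I * k / rX) with hu
  set v := Complex.exp (2 * Real.pi * Complex.I * l / rY) with hv
  have hau : norm u = 1 := by
    rw [hu]
    have h : (2 * Real.pi * Complex.I * k / rX) =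
        ((2 * Real.pi * k / rX : ℝ) : ℂ) * Complex.I := by push_cast; ring
    rw [h, Complex.norm_exp_ofReal_mul_I]
  have hav : norm v = 1 := by
    rw [hv]
    have h : (2 * Real.pi * Complex.I * l / rY) =
        ((2 * Real.pi * l / rY : ℝ) : ℂ) * Complex.I := by push_cast; ring
    rw [h, Complex.norm_exp_ofReal_mul_I]
  set c := (u * starRingEnd ℂ v).re with hc
  have habs_uv : norm (u * starRingEnd ℂ v) = 1 := by
    rw [norm_mul, Complex.norm_conj, hau, hav]; ring
  have hc1 : c ≤ 1 := by
    calc c ≤ norm (u * starRingEnd ℂ v) := Complex.re_le_norm _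
    _ = 1 := habs_uv
  have hns : Complex.normSq (u * starRingEnd ℂ v) = 1 := by
    rw [← Complex.sq_norm, habs_uv]; norm_num
  have hclt : c < 1 := by
    rcases lt_or_eq_of_le hc1 with h | h
    · exact h
    exfalso
    have hsq : c ^ 2 + (u * starRingEnd ℂ v).im ^ 2 = 1 := by
      rw [← hns, Complex.normSq_apply, ← hc]; ring
    have him : (u * starRingEnd ℂ v).im = 0 := by nlinarith [sq_nonneg (u * starRingEnd ℂ v).im]
    have huv1 : u * starRingEnd ℂ v = 1 := by
      apply Complex.ext
      · simpa [← hc, ← h] using rfl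
      · simpa using him
    apply hne
    have hvv : starRingEnd ℂ v * v = 1 := by
      have hnv : Complex.normSq v = 1 := by rw [← Complex.sq_norm, hav]; norm_num
      rw [mul_comm, Complex.mul_conj, hnv, Complex.ofReal_one]
    calc u = u * (starRingEnd ℂ v * v) := by rw [hvv, mul_one]
    _ = (u * starRingEnd ℂ v) * v := by ring
    _ = v := by rw [huv1, one_mul]
  have key : ∀ a b : ℝ, (norm (u * a + v * b)) ^ 2 = a ^ 2 + b ^ 2 + 2 * a * b * c := by
    intro a b
    rw [Complex.sq_norm, Complex.normSq_add]
    have h1 : Complex.normSq (u * a) = a ^ 2 := by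
      rw [Complex.normSq_mul, Complex.normSq_ofReal, ← Complex.sq_norm, hau]; ring
    have h2 : Complex.normSq (v * b) = b ^ 2 := by
      rw [Complex.normSq_mul, Complex.normSq_ofReal, ← Complex.sq_norm, hav]; ring
    have h3 : (u * a * starRingEnd ℂ (v * b)) = (u * starRingEnd ℂ v) * ((a * b : ℝ) : ℂ) := by
      rw [map_mul, Complex.conj_ofReal]; push_cast; ring
    rw [h1, h2, h3]
    simp [Complex.mul_re, Complex.ofReal_re, Complex.ofReal_im, ← hc]
    ring
  set M := max (max SX SY) (norm (u * SX + v * SY)) with hM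
  have hMX : SX ≤ M := le_trans (le_max_left _ _) (le_max_left _ _)
  have hMY : SY ≤ M := le_trans (le_max_right _ _) (le_max_left _ _)
  have hMV : norm (u * SX + v * SY) ≤ M := le_max_right _ _
  have hM0 : 0 ≤ M := le_trans hSX.le hMX
  have hV2 : (norm (u * SX + v * SY)) ^ 2 = SX ^ 2 + SY ^ 2 + 2 * SX * SY * c := key SX SY
  constructor
  · rintro a b ⟨ha0, haX⟩ ⟨hb0, hbY⟩
    apply le_of_pow_le_pow_left₀ two_ne_zero hM0
    rw [key a b]
    have hV2le : SX ^ 2 + SY ^ 2 + 2 * SX * SY * c ≤ M ^ 2 := by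
      rw [← hV2]; exact pow_le_pow_left₀ (norm_nonneg _) hMV 2
    have hYle : SY ^ 2 ≤ M ^ 2 := pow_le_pow_left₀ hSY.le hMY 2
    have hXle : SX ^ 2 ≤ M ^ 2 := pow_le_pow_left₀ hSX.le hMX 2
    rcases le_or_gt (a + 2 * b * c) 0 with h | h
    · have hnp : a * (a + 2 * b * c) ≤ 0 := mul_nonpos_of_nonneg_of_nonpos ha0 h
      nlinarith [pow_le_pow_left₀ hb0 hbY 2]
    · have step1 : a ^ 2 + b ^ 2 + 2 * a * b * c ≤ SX ^ 2 + b ^ 2 + 2 * SX * b * c := by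
        nlinarith [mul_le_mul_of_nonneg_right haX h.le]
      rcases le_or_gt (b + 2 * SX * c) 0 with h2 | h2
      · have hnp : b * (b + 2 * SX * c) ≤ 0 := mul_nonpos_of_nonneg_of_nonpos hb0 h2
        nlinarith [step1, hXle]
      · have step2 : SX ^ 2 + b ^ 2 + 2 * SX * b * c ≤ SX ^ 2 + SY ^ 2 + 2 * SX * SY * c := by
          nlinarith [mul_le_mul_of_nonneg_right hbY h2.le, mul_le_mul_of_nonneg_left hbY hSY.le]
        linarith
  · have hX1 : SX < 1 := by linarith
    have hY1 : SY < 1 := by linarith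
    have hVlt : norm (u * SX + v * SY) < 1 := by
      have hsq : (norm (u * SX + v * SY)) ^ 2 < 1 := by
        rw [hV2]; nlinarith [mul_pos hSX hSY]
      nlinarith [norm_nonneg (u * SX + v * SY)]
    exact max_lt (max_lt hX1 hY1) hVlt
end
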